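/- arXiv:1602.02390 — 2 statements merged into one kernel-verified Lean document; each statement's English description precedes it below -/
import Mathlib

section
/- Let k ≥ 2 be an even integer. Let X and Y be independent random variables, each uniformly distributed on a k-element alphabet, let Z = 1 if X = Y and Z = 0 otherwise, and set U = (X, Z), V = (Y, Z). Then for every finite-valued random variable Q on the same probability space with I(U ; V | Q) = 0, it holds that H(U | Q) + H(V | Q) ≤ 2 · (1 − 1/k) · log(k/2). -/
open MeasureTheory ProbabilityTheory Real
open scoped ENNReal
open Finset

/-- The probability that the random variable `X` takes the value `x`. -/
noncomputable def pm {Ω S : Type*} [MeasurableSpace Ω] (μ : Measure Ω) (X : Ω → S) (x : S) : ℝ :=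
  (μ (X ⁻¹' {x})).toReal

/-- Shannon entropy (with natural logarithm) of a finite-valued random variable. -/
noncomputable def entH {Ω S : Type*} [MeasurableSpace Ω] [Fintype S]
    (μ : Measure Ω) (X : Ω → S) : ℝ :=
  ∑ x : S, Real.negMulLog (pm μ X x)

/-- Conditional entropy `H(X | Y)`. -/
noncomputable def condEnt {Ω S T : Type*} [MeasurableSpace Ω] [Fintype S] [Fintype T]
    (μ : Measure Ω) (X : Ω → S) (Y : Ω → T) : ℝ :=
  entH μ (fun ω => (X ω, Y ω)) - entH μ Y

/-- Mutual information `I(X ; Y)`. -/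
noncomputable def mutInf {Ω S T : Type*} [MeasurableSpace Ω] [Fintype S] [Fintype T]
    (μ : Measure Ω) (X : Ω → S) (Y : Ω → T) : ℝ :=
  entH μ X + entH μ Y - entH μ (fun ω => (X ω, Y ω))

/-- Conditional mutual information `I(X ; Y | Z)`. -/
noncomputable def condMutInf {Ω S T U : Type*} [MeasurableSpace Ω] [Fintype S] [Fintype T]
    [Fintype U] (μ : Measure Ω) (X : Ω → S) (Y : Ω → T) (Z : Ω → U) : ℝ :=
  entH μ (fun ω => (X ω, Z ω)) + entH μ (fun ω => (Y ω, Z ω))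
    - entH μ (fun ω => ((X ω, Y ω), Z ω)) - entH μ Z


section fin
variable {S S' S'' : Type*} [Fintype S] [Fintype S'] [Fintype S'']

open Classical in
noncomputable def fmap (g : S → S') (p : S → ℝ) : S' → ℝ :=
  fun y => ∑ x, if g x = y then p x else 0

noncomputable def Hent (p : S → ℝ) : ℝ := ∑ x, Real.negMulLog (p x)

set_option linter.unusedSectionVars false

open Classical in
lemma fmap_apply (g : S → S') (p : S → ℝ) (y : S') :
    fmap g p y = ∑ x, if g x = y then p x else 0 := by
  simp [fmap]

lemma fmap_nonneg (g : S → S') {p : S → ℝ} (hp : ∀ x, 0 ≤ p x) (y : S') :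
    0 ≤ fmap g p y := by
  classical
  rw [fmap_apply]
  exact Finset.sum_nonneg fun x _ => by split <;> simp [hp x]

lemma fmap_sum (g : S → S') (p : S → ℝ) : ∑ y, fmap g p y = ∑ x, p x := by
  classical
  simp only [fmap_apply]
  rw [Finset.sum_comm]
  exact Finset.sum_congr rfl fun x _ => by simp

lemma fmap_fmap (g : S → S') (h : S' → S'') (p : S → ℝ) (z : S'') :
    fmap h (fmap g p) z = fmap (fun x => h (g x)) p z := by
  classical
  simp only [fmap_apply]
  calc ∑ y, (if h y = z then ∑ x, (if g x = y then p x else 0) else 0)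
      = ∑ y, ∑ x, (if h y = z then (if g x = y then p x else 0) else 0) :=
        Finset.sum_congr rfl fun y _ => by split <;> simp
    _ = ∑ x, ∑ y, (if h y = z then (if g x = y then p x else 0) else 0) :=
        Finset.sum_comm
    _ = ∑ x, (if h (g x) = z then p x else 0) := by
        refine Finset.sum_congr rfl fun x _ => ?_
        rw [Finset.sum_eq_single (g x)]
        · by_cases h1 : h (g x) = z <;> simp [h1]
        · intro y _ hy
          rw [if_neg (show ¬ g x = y from fun hc => hy hc.symm)]
          simp
        · simp

lemma fmap_le_fmap {g : S → S'} {h : S → S''} {p : S → ℝ} (hp : ∀ x, 0 ≤ p x)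
    {y : S'} {z : S''} (hcomp : ∀ x, g x = y → h x = z) :
    fmap g p y ≤ fmap h p z := by
  classical
  rw [fmap_apply, fmap_apply]
  refine Finset.sum_le_sum fun x _ => ?_
  by_cases h1 : g x = y
  · simp [h1, hcomp x h1]
  · simp only [if_neg h1]
    split <;> simp [hp x]

lemma single_le_fmap {g : S → S'} {p : S → ℝ} (hp : ∀ x, 0 ≤ p x) (x : S) :
    p x ≤ fmap g p (g x) := by
  classical
  rw [fmap_apply]
  have := Finset.single_le_sum (f := fun x' => if g x' = g x then p x' else 0)
    (fun i _ => by split <;> simp [hp i]) (Finset.mem_univ x)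
  simpa using this

lemma pos_of_fmap_pos {g : S → S'} {p : S → ℝ} (hp : ∀ x, 0 ≤ p x) {y : S'}
    (h : 0 < fmap g p y) : ∃ x, g x = y ∧ 0 < p x := by
  classical
  by_contra hc
  push_neg at hc
  have h2 : fmap g p y ≤ 0 := by
    rw [fmap_apply]
    refine Finset.sum_nonpos fun x _ => ?_
    by_cases h1 : g x = y
    · rw [if_pos h1]
      exact le_antisymm (hc x h1) (hp x) ▸ le_refl _
    · simp [h1]
  linarith

lemma gibbs_term {x y : ℝ} (hx : 0 ≤ x) (hd : x ≠ 0 → 0 < y) (hy : 0 ≤ y) :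
    x * Real.log (y / x) ≤ y - x := by
  rcases eq_or_lt_of_le hx with h | h
  · simp [← h, hy]
  · have hy' := hd (ne_of_gt h)
    have hpos : 0 < y / x := div_pos hy' h
    have := Real.log_le_sub_one_of_pos hpos
    calc x * Real.log (y/x) ≤ x * (y/x - 1) := by nlinarith
    _ = y - x := by field_simp

lemma gibbs_term_eq {x y : ℝ} (hx : 0 ≤ x) (hd : x ≠ 0 → 0 < y)
    (he : x * Real.log (y / x) = y - x) : y = x := by
  rcases eq_or_lt_of_le hx with h | h
  · simp [← h] at he ⊢; linarith
  · have hy := hd (ne_of_gt h)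
    by_contra hne
    have hne1 : y / x ≠ 1 := by
      intro hc
      rw [div_eq_one_iff_eq (ne_of_gt h)] at hc
      exact hne hc
    have h1 := Real.log_lt_sub_one_of_pos (div_pos hy h) hne1
    have h2 : x * Real.log (y/x) < x * (y/x - 1) := by nlinarith
    have hxx : x * (y/x - 1) = y - x := by field_simp
    linarith

end fin

section fin2
variable {S G T B B' : Type*} [Fintype S] [Fintype G] [Fintype T] [Fintype B] [Fintype B']

lemma sum_eq_one_pos {r : S → ℝ} (h0 : ∀ x, 0 ≤ r x) (h1 : ∑ x, r x = 1) :
    ∃ x, 0 < r x := by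
  by_contra hc
  push_neg at hc
  have : ∑ x, r x ≤ 0 := Finset.sum_nonpos fun x _ => hc x
  linarith

lemma maxent {d : S → ℝ} (h0 : ∀ s, 0 ≤ d s) (h1 : ∑ s, d s = 1)
    {n : ℕ} (hn : 1 ≤ n) (F : Finset S) (hsupp : ∀ s, d s ≠ 0 → s ∈ F)
    (hcard : F.card ≤ n) : Hent d ≤ Real.log n := by
  classical
  set q : S → ℝ := fun s => if s ∈ F then (n : ℝ)⁻¹ else 0 with hq
  have hnpos : (0:ℝ) < n := by exact_mod_cast Nat.lt_of_lt_of_le Nat.zero_lt_one hn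
  have hq0 : ∀ s, 0 ≤ q s := fun s => by
    rw [hq]; dsimp only; split <;> positivity
  have hqsum : ∑ s, q s ≤ 1 := by
    rw [hq]
    calc (∑ s, if s ∈ F then (n:ℝ)⁻¹ else 0) = F.card * (n:ℝ)⁻¹ := by
          rw [Finset.sum_ite_mem, Finset.univ_inter, Finset.sum_const, nsmul_eq_mul]
      _ ≤ n * (n:ℝ)⁻¹ := by
          apply mul_le_mul_of_nonneg_right _ (by positivity)
          exact_mod_cast hcard
      _ = 1 := mul_inv_cancel₀ (ne_of_gt hnpos)
  have key : ∑ s, d s * Real.log (q s / d s) ≤ ∑ s, (q s - d s) :=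
    Finset.sum_le_sum fun s _ =>
      gibbs_term (h0 s) (fun hs => by simp only [hq, if_pos (hsupp s hs)]; positivity) (hq0 s)
  have hLHS : ∑ s, d s * Real.log (q s / d s) = Hent d - Real.log n := by
    have : ∀ s, d s * Real.log (q s / d s) = Real.negMulLog (d s) - d s * Real.log n := by
      intro s
      by_cases hd : d s = 0
      · simp [hd, Real.negMulLog]
      · have hF := hsupp s hd
        have hqs : q s = (n:ℝ)⁻¹ := by simp [hq, hF]
        rw [hqs, Real.log_div (by positivity) hd, Real.log_inv, Real.negMulLog]
        ring
    rw [Finset.sum_congr rfl (fun s _ => this s), Finset.sum_sub_distrib, ← Finset.sum_mul, h1,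
      Hent]
    ring
  have hRHS : ∑ s, (q s - d s) ≤ 0 := by
    rw [Finset.sum_sub_distrib, h1]
    linarith
  linarith

/-- marginal of a joint mass function -/
lemma fmap_fst (P : B × B' → ℝ) (u : B) : fmap Prod.fst P u = ∑ v, P (u, v) := by
  classical
  rw [fmap_apply, Fintype.sum_prod_type]
  rw [Finset.sum_eq_single u]
  · exact Finset.sum_congr rfl fun v _ => by simp
  · intro b _ hb
    exact Finset.sum_eq_zero fun v _ => by simp [hb]
  · simp

lemma fmap_snd (P : B × B' → ℝ) (v : B') : fmap Prod.snd P v = ∑ u, P (u, v) := by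
  classical
  rw [fmap_apply, Fintype.sum_prod_type]
  refine Finset.sum_congr rfl fun u _ => ?_
  simp

/-- the mutual information identity -/
lemma mi_identity (r : G → ℝ) (h0 : ∀ x, 0 ≤ r x) (gU : G → B) (gV : G → B') :
    Hent (fmap gU r) + Hent (fmap gV r) - Hent (fmap (fun x => (gU x, gV x)) r)
      = -∑ uv : B × B', (fmap (fun x => (gU x, gV x)) r uv)
          * Real.log ((fmap gU r uv.1 * fmap gV r uv.2) / fmap (fun x => (gU x, gV x)) r uv) := by
  classical
  set P : B × B' → ℝ := fmap (fun x => (gU x, gV x)) r with hP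
  have hP0 : ∀ uv, 0 ≤ P uv := fun uv => fmap_nonneg _ h0 uv
  have hU : ∀ u, fmap gU r u = ∑ v, P (u, v) := by
    intro u
    rw [← fmap_fst, hP, fmap_fmap]
  have hV : ∀ v, fmap gV r v = ∑ u, P (u, v) := by
    intro v
    rw [← fmap_snd, hP, fmap_fmap]
  have hUP : ∀ u v, P (u, v) ≤ fmap gU r u := by
    intro u v
    rw [hU]
    exact Finset.single_le_sum (f := fun v' => P (u, v')) (fun i _ => hP0 _) (Finset.mem_univ v)
  have hVP : ∀ u v, P (u, v) ≤ fmap gV r v := by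
    intro u v
    rw [hV]
    exact Finset.single_le_sum (f := fun u' => P (u', v)) (fun i _ => hP0 _) (Finset.mem_univ u)
  have e1 : Hent (fmap gU r) = ∑ uv : B × B', -(P uv * Real.log (fmap gU r uv.1)) := by
    rw [Hent, Fintype.sum_prod_type]
    refine Finset.sum_congr rfl fun u _ => Eq.symm ?_
    calc ∑ v, -(P (u, v) * Real.log (fmap gU r u))
        = -((∑ v, P (u, v)) * Real.log (fmap gU r u)) := by
          rw [Finset.sum_neg_distrib, Finset.sum_mul]
      _ = Real.negMulLog (fmap gU r u) := by rw [← hU u, Real.negMulLog, neg_mul]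
  have e2 : Hent (fmap gV r) = ∑ uv : B × B', -(P uv * Real.log (fmap gV r uv.2)) := by
    rw [Hent, Fintype.sum_prod_type_right]
    refine Finset.sum_congr rfl fun v _ => Eq.symm ?_
    calc ∑ u, -(P (u, v) * Real.log (fmap gV r v))
        = -((∑ u, P (u, v)) * Real.log (fmap gV r v)) := by
          rw [Finset.sum_neg_distrib, Finset.sum_mul]
      _ = Real.negMulLog (fmap gV r v) := by rw [← hV v, Real.negMulLog, neg_mul]
  have e3 : Hent P = ∑ uv : B × B', -(P uv * Real.log (P uv)) := by
    rw [Hent]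
    exact Finset.sum_congr rfl fun uv _ => by rw [Real.negMulLog, neg_mul]
  rw [e1, e2, e3, ← Finset.sum_add_distrib, ← Finset.sum_sub_distrib, ← Finset.sum_neg_distrib]
  refine Finset.sum_congr rfl fun uv _ => ?_
  rcases eq_or_lt_of_le (hP0 uv) with h | h
  · simp [← h]
  · have hu : 0 < fmap gU r uv.1 := lt_of_lt_of_le h (hUP uv.1 uv.2)
    have hv : 0 < fmap gV r uv.2 := lt_of_lt_of_le h (hVP uv.1 uv.2)
    rw [Real.log_div (by positivity) (ne_of_gt h), Real.log_mul (ne_of_gt hu) (ne_of_gt hv)]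
    ring

lemma mi_sum_q (r : G → ℝ) (h1 : ∑ x, r x = 1) (gU : G → B) (gV : G → B') :
    ∑ uv : B × B', fmap gU r uv.1 * fmap gV r uv.2 = 1 := by
  rw [Fintype.sum_prod_type, ← Finset.sum_mul_sum, fmap_sum, fmap_sum, h1, one_mul]

lemma mi_nonneg (r : G → ℝ) (h0 : ∀ x, 0 ≤ r x) (h1 : ∑ x, r x = 1)
    (gU : G → B) (gV : G → B') :
    0 ≤ Hent (fmap gU r) + Hent (fmap gV r) - Hent (fmap (fun x => (gU x, gV x)) r) := by
  classical
  rw [mi_identity r h0 gU gV, neg_nonneg]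
  set P : B × B' → ℝ := fmap (fun x => (gU x, gV x)) r with hP
  have hP0 : ∀ uv, 0 ≤ P uv := fun uv => fmap_nonneg _ h0 uv
  have hdom : ∀ uv : B × B', P uv ≠ 0 → 0 < fmap gU r uv.1 * fmap gV r uv.2 := by
    intro uv hne
    have h := lt_of_le_of_ne (hP0 uv) (Ne.symm hne)
    obtain ⟨x, hx1, hx2⟩ := pos_of_fmap_pos h0 h
    have h1' : 0 < fmap gU r uv.1 := by
      rw [show uv.1 = gU x from by rw [← hx1]]
      exact lt_of_lt_of_le hx2 (single_le_fmap h0 x)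
    have h2' : 0 < fmap gV r uv.2 := by
      rw [show uv.2 = gV x from by rw [← hx1]]
      exact lt_of_lt_of_le hx2 (single_le_fmap h0 x)
    exact mul_pos h1' h2'
  calc ∑ uv : B × B', P uv * Real.log ((fmap gU r uv.1 * fmap gV r uv.2) / P uv)
      ≤ ∑ uv : B × B', ((fmap gU r uv.1 * fmap gV r uv.2) - P uv) :=
        Finset.sum_le_sum fun uv _ => gibbs_term (hP0 uv) (hdom uv)
          (mul_nonneg (fmap_nonneg _ h0 _) (fmap_nonneg _ h0 _))
    _ = 0 := by
        rw [Finset.sum_sub_distrib, mi_sum_q r h1 gU gV, hP, fmap_sum, h1, sub_self]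

lemma mi_factor (r : G → ℝ) (h0 : ∀ x, 0 ≤ r x) (h1 : ∑ x, r x = 1)
    (gU : G → B) (gV : G → B')
    (hI : Hent (fmap gU r) + Hent (fmap gV r) - Hent (fmap (fun x => (gU x, gV x)) r) = 0) :
    ∀ uv : B × B', fmap (fun x => (gU x, gV x)) r uv = fmap gU r uv.1 * fmap gV r uv.2 := by
  classical
  rw [mi_identity r h0 gU gV, neg_eq_zero] at hI
  set P : B × B' → ℝ := fmap (fun x => (gU x, gV x)) r with hP
  have hP0 : ∀ uv, 0 ≤ P uv := fun uv => fmap_nonneg _ h0 uv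
  have hdom : ∀ uv : B × B', P uv ≠ 0 → 0 < fmap gU r uv.1 * fmap gV r uv.2 := by
    intro uv hne
    have h := lt_of_le_of_ne (hP0 uv) (Ne.symm hne)
    obtain ⟨x, hx1, hx2⟩ := pos_of_fmap_pos h0 h
    have h1' : 0 < fmap gU r uv.1 := by
      rw [show uv.1 = gU x from by rw [← hx1]]
      exact lt_of_lt_of_le hx2 (single_le_fmap h0 x)
    have h2' : 0 < fmap gV r uv.2 := by
      rw [show uv.2 = gV x from by rw [← hx1]]
      exact lt_of_lt_of_le hx2 (single_le_fmap h0 x)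
    exact mul_pos h1' h2'
  have hsum : ∑ uv : B × B', ((fmap gU r uv.1 * fmap gV r uv.2) - P uv) = 0 := by
    rw [Finset.sum_sub_distrib, mi_sum_q r h1 gU gV, hP, fmap_sum, h1, sub_self]
  have hterm : ∀ uv : B × B',
      P uv * Real.log ((fmap gU r uv.1 * fmap gV r uv.2) / P uv)
        = (fmap gU r uv.1 * fmap gV r uv.2) - P uv := by
    by_contra hc
    push_neg at hc
    obtain ⟨uv0, huv0⟩ := hc
    have hlt : P uv0 * Real.log ((fmap gU r uv0.1 * fmap gV r uv0.2) / P uv0)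
        < (fmap gU r uv0.1 * fmap gV r uv0.2) - P uv0 :=
      lt_of_le_of_ne (gibbs_term (hP0 uv0) (hdom uv0)
        (mul_nonneg (fmap_nonneg _ h0 _) (fmap_nonneg _ h0 _))) huv0
    have : ∑ uv : B × B', P uv * Real.log ((fmap gU r uv.1 * fmap gV r uv.2) / P uv)
        < ∑ uv : B × B', ((fmap gU r uv.1 * fmap gV r uv.2) - P uv) :=
      Finset.sum_lt_sum (fun uv _ => gibbs_term (hP0 uv) (hdom uv)
        (mul_nonneg (fmap_nonneg _ h0 _) (fmap_nonneg _ h0 _))) ⟨uv0, Finset.mem_univ _, hlt⟩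
    rw [hI, hsum] at this
    exact lt_irrefl 0 this
  intro uv
  exact (gibbs_term_eq (hP0 uv) (hdom uv) (hterm uv)).symm

end fin2

section fin3
variable {G T S' : Type*} [Fintype G] [Fintype T] [Fintype S']

lemma slice_zero {p : G × T → ℝ} (hp : ∀ x, 0 ≤ p x) {t : T}
    (hw : fmap Prod.snd p t = 0) (ab : G) : p (ab, t) = 0 := by
  classical
  rw [fmap_snd] at hw
  have := (Finset.sum_eq_zero_iff_of_nonneg (fun i _ => hp (i, t))).1 hw ab (Finset.mem_univ ab)
  exact this

lemma fmap_lift (p : G × T → ℝ) (g : G → S') (u : S') (t : T) :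
    fmap (fun x : G × T => (g x.1, x.2)) p (u, t) = fmap g (fun ab => p (ab, t)) u := by
  classical
  rw [fmap_apply, fmap_apply, Fintype.sum_prod_type]
  refine Finset.sum_congr rfl fun ab _ => ?_
  rw [Finset.sum_eq_single t]
  · by_cases h1 : g ab = u
    · simp [h1]
    · simp [h1, Prod.ext_iff]
  · intro t' _ ht'
    simp [Prod.ext_iff, ht']
  · simp

lemma fmap_slice_eq (p : G × T → ℝ) (hp : ∀ x, 0 ≤ p x) (g : G → S') (u : S') (t : T) :
    fmap g (fun ab => p (ab, t)) u
      = fmap Prod.snd p t * fmap g (fun ab => p (ab, t) / fmap Prod.snd p t) u := by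
  classical
  by_cases hw : fmap Prod.snd p t = 0
  · rw [hw, zero_mul, fmap_apply]
    exact Finset.sum_eq_zero fun ab _ => by
      rw [slice_zero hp hw ab]; simp
  · rw [fmap_apply g (fun ab => p (ab, t)) u,
      fmap_apply g (fun ab => p (ab, t) / fmap Prod.snd p t) u, Finset.mul_sum]
    refine Finset.sum_congr rfl fun ab _ => ?_
    by_cases h1 : g ab = u
    · rw [if_pos h1, if_pos h1, mul_div_cancel₀ _ hw]
    · simp [h1]

/-- chain rule / conditional entropy decomposition -/
lemma cond_decomp (p : G × T → ℝ) (hp : ∀ x, 0 ≤ p x) (g : G → S') :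
    Hent (fmap (fun x : G × T => (g x.1, x.2)) p)
      = Hent (fmap Prod.snd p)
        + ∑ t, fmap Prod.snd p t
            * Hent (fmap g (fun ab => p (ab, t) / fmap Prod.snd p t)) := by
  classical
  set w : T → ℝ := fmap Prod.snd p with hwdef
  have key : ∀ t u, fmap (fun x : G × T => (g x.1, x.2)) p (u, t)
      = w t * fmap g (fun ab => p (ab, t) / w t) u := fun t u => by
    rw [fmap_lift, fmap_slice_eq p hp]
  rw [Hent, Fintype.sum_prod_type_right]
  have pert : ∀ t, ∑ u, Real.negMulLog (fmap (fun x : G × T => (g x.1, x.2)) p (u, t))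
      = Real.negMulLog (w t) + w t * Hent (fmap g (fun ab => p (ab, t) / w t)) := by
    intro t
    by_cases hw : w t = 0
    · rw [hw]
      simp only [Real.negMulLog_zero, zero_mul, add_zero]
      exact Finset.sum_eq_zero fun u _ => by rw [key t u, hw, zero_mul, Real.negMulLog_zero]
    · have hsum1 : ∑ u, fmap g (fun ab => p (ab, t) / w t) u = 1 := by
        rw [fmap_sum, ← Finset.sum_div]
        rw [show ∑ ab, p (ab, t) = w t from (fmap_snd p t).symm]
        exact div_self hw
      calc ∑ u, Real.negMulLog (fmap (fun x : G × T => (g x.1, x.2)) p (u, t))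
          = ∑ u, (fmap g (fun ab => p (ab, t) / w t) u * Real.negMulLog (w t)
              + w t * Real.negMulLog (fmap g (fun ab => p (ab, t) / w t) u)) := by
            refine Finset.sum_congr rfl fun u _ => ?_
            rw [key t u, Real.negMulLog_mul]
        _ = Real.negMulLog (w t) + w t * Hent (fmap g (fun ab => p (ab, t) / w t)) := by
            rw [Finset.sum_add_distrib, ← Finset.sum_mul, hsum1, one_mul, ← Finset.mul_sum, Hent]
  rw [Finset.sum_congr rfl fun t _ => pert t, Finset.sum_add_distrib, Hent]

end fin3

section pert
variable {A : Type*} [Fintype A] [DecidableEq A]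

/-- the EQ function -/
def zf {A : Type*} [DecidableEq A] (ab : A × A) : Fin 2 := if ab.1 = ab.2 then 1 else 0

lemma P_apply (r : A × A → ℝ) (a b : A) (z z' : Fin 2) :
    fmap (fun ab : A × A => ((ab.1, zf ab), (ab.2, zf ab))) r ((a, z), (b, z'))
      = if zf (a, b) = z ∧ z = z' then r (a, b) else 0 := by
  classical
  rw [fmap_apply]
  rw [Finset.sum_eq_single (a, b)]
  · by_cases h1 : zf (a, b) = z
    · by_cases h2 : z = z' <;> simp_all [Prod.ext_iff]
    · simp_all [Prod.ext_iff]
  · intro xy _ hxy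
    rw [if_neg]
    simp only [Prod.ext_iff, not_and]
    intro h1 h2 _
    exact absurd (Prod.ext h1.1 h2) hxy
  · simp

lemma rU_ge (r : A × A → ℝ) (h0 : ∀ x, 0 ≤ r x) (a b : A) :
    r (a, b) ≤ fmap (fun ab : A × A => (ab.1, zf ab)) r (a, zf (a, b)) := by
  have := single_le_fmap (g := fun ab : A × A => (ab.1, zf ab)) h0 (a, b)
  exact this

lemma rV_ge (r : A × A → ℝ) (h0 : ∀ x, 0 ≤ r x) (a b : A) :
    r (a, b) ≤ fmap (fun ab : A × A => (ab.2, zf ab)) r (b, zf (a, b)) := by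
  have := single_le_fmap (g := fun ab : A × A => (ab.2, zf ab)) h0 (a, b)
  exact this

lemma pert_claim (r : A × A → ℝ) (h0 : ∀ x, 0 ≤ r x)
    (hfac : ∀ uv : (A × Fin 2) × (A × Fin 2),
      fmap (fun ab : A × A => ((ab.1, zf ab), (ab.2, zf ab))) r uv
        = fmap (fun ab : A × A => (ab.1, zf ab)) r uv.1
          * fmap (fun ab : A × A => (ab.2, zf ab)) r uv.2)
    {a b a' b' : A} (hab : 0 < r (a, b)) (hab' : 0 < r (a', b')) :
    zf (a, b) = zf (a', b') ∧ 0 < r (a, b') := by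
  have h1 : 0 < fmap (fun ab : A × A => (ab.1, zf ab)) r (a, zf (a, b)) :=
    lt_of_lt_of_le hab (rU_ge r h0 a b)
  have h2 : 0 < fmap (fun ab : A × A => (ab.2, zf ab)) r (b', zf (a', b')) :=
    lt_of_lt_of_le hab' (rV_ge r h0 a' b')
  have h3 : 0 < fmap (fun ab : A × A => ((ab.1, zf ab), (ab.2, zf ab))) r
      ((a, zf (a, b)), (b', zf (a', b'))) := by
    rw [hfac]
    exact mul_pos h1 h2
  rw [P_apply] at h3
  by_cases hc : zf (a, b') = zf (a, b) ∧ zf (a, b) = zf (a', b')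
  · exact ⟨hc.2, by rwa [if_pos hc] at h3⟩
  · rw [if_neg hc] at h3
    exact absurd h3 (lt_irrefl 0)

end pert

section pertmain
variable {A : Type*} [Fintype A] [DecidableEq A]

lemma zf_diag (a : A) : zf (a, a) = 1 := by simp [zf]

lemma zf_off {a b : A} (h : a ≠ b) : zf (a, b) = 0 := by simp [zf, h]

lemma eq_of_zf_one {a b : A} (h : zf (a, b) = 1) : a = b := by
  by_contra hc
  rw [zf_off hc] at h
  exact absurd h (by decide)

lemma pert_main (r : A × A → ℝ) (h0 : ∀ x, 0 ≤ r x) (h1 : ∑ x, r x = 1)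
    (hk2 : 2 ≤ Fintype.card A)
    (hI : Hent (fmap (fun ab : A × A => (ab.1, zf ab)) r)
        + Hent (fmap (fun ab : A × A => (ab.2, zf ab)) r)
        - Hent (fmap (fun ab : A × A => ((ab.1, zf ab), (ab.2, zf ab))) r) = 0) :
    Hent (fmap (fun ab : A × A => (ab.1, zf ab)) r)
        + Hent (fmap (fun ab : A × A => (ab.2, zf ab)) r)
      ≤ (1 - ∑ a, r (a, a)) * (2 * Real.log (Fintype.card A / 2)) := by
  classical
  have hfac := mi_factor r h0 h1 (fun ab : A × A => (ab.1, zf ab))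
    (fun ab : A × A => (ab.2, zf ab)) hI
  obtain ⟨ab0, hab0⟩ := sum_eq_one_pos h0 h1
  obtain ⟨a0, b0⟩ := ab0
  have hUsum : ∑ u, fmap (fun ab : A × A => (ab.1, zf ab)) r u = 1 := by
    rw [fmap_sum]; exact h1
  have hVsum : ∑ u, fmap (fun ab : A × A => (ab.2, zf ab)) r u = 1 := by
    rw [fmap_sum]; exact h1
  by_cases hdiag : a0 = b0
  · -- diagonal case: point mass
    subst hdiag
    have hsupp : ∀ ab : A × A, r ab ≠ 0 → ab = (a0, a0) := by
      intro ⟨a, b⟩ hne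
      have hpos : 0 < r (a, b) := lt_of_le_of_ne (h0 _) (Ne.symm hne)
      obtain ⟨hz1, _⟩ := pert_claim r h0 hfac hab0 hpos
      obtain ⟨hz2, hr2⟩ := pert_claim r h0 hfac hpos hab0
      -- hz1 : zf (a0,a0) = zf (a,b), hr2 : 0 < r (a, a0)
      have hab : a = b := eq_of_zf_one (by rw [← hz1, zf_diag])
      obtain ⟨hz3, _⟩ := pert_claim r h0 hfac hr2 hab0
      -- hz3 : zf (a, a0) = zf (a0, a0) = 1
      have : a = a0 := eq_of_zf_one (by rw [hz3, zf_diag])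
      rw [this, ← hab, this]
    have hdsum : ∑ a, r (a, a) = 1 := by
      rw [Finset.sum_eq_single a0]
      · rw [← h1, Finset.sum_eq_single (a0, a0)]
        · intro y _ hy
          by_contra hc
          exact hy (hsupp y hc)
        · simp
      · intro a _ ha
        by_contra hc
        exact ha (congrArg Prod.fst (hsupp (a, a) hc))
      · simp
    rw [hdsum, sub_self, zero_mul]
    have hbU : Hent (fmap (fun ab : A × A => (ab.1, zf ab)) r) ≤ Real.log (1 : ℕ) := by
      refine maxent (fun u => fmap_nonneg _ h0 u) hUsum le_rfl {(a0, 1)} ?_ (by simp)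
      intro u hu
      obtain ⟨ab, hab, habpos⟩ := pos_of_fmap_pos h0 (lt_of_le_of_ne (fmap_nonneg _ h0 u) (Ne.symm hu))
      rw [hsupp ab (ne_of_gt habpos)] at hab
      rw [← hab]
      simp [zf_diag]
    have hbV : Hent (fmap (fun ab : A × A => (ab.2, zf ab)) r) ≤ Real.log (1 : ℕ) := by
      refine maxent (fun u => fmap_nonneg _ h0 u) hVsum le_rfl {(a0, 1)} ?_ (by simp)
      intro u hu
      obtain ⟨ab, hab, habpos⟩ := pos_of_fmap_pos h0 (lt_of_le_of_ne (fmap_nonneg _ h0 u) (Ne.symm hu))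
      rw [hsupp ab (ne_of_gt habpos)] at hab
      rw [← hab]
      simp [zf_diag]
    rw [Nat.cast_one, Real.log_one] at hbU hbV
    linarith
  · -- off-diagonal case
    have hz0 : zf (a0, b0) = 0 := zf_off hdiag
    have hd0 : ∀ a : A, r (a, a) = 0 := by
      intro a
      by_contra hc
      have hpos : 0 < r (a, a) := lt_of_le_of_ne (h0 _) (Ne.symm hc)
      obtain ⟨hz, _⟩ := pert_claim r h0 hfac hab0 hpos
      rw [hz0, zf_diag] at hz
      exact absurd hz (by decide)
    have hdsum : ∑ a, r (a, a) = 0 := Finset.sum_eq_zero fun a _ => hd0 a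
    rw [hdsum, sub_zero, one_mul]
    set sX : Finset A := Finset.univ.filter (fun a => ∃ b, r (a, b) ≠ 0) with hsX
    set sY : Finset A := Finset.univ.filter (fun b => ∃ a, r (a, b) ≠ 0) with hsY
    have hdisj : Disjoint sX sY := by
      rw [Finset.disjoint_left]
      intro c hcX hcY
      rw [hsX, Finset.mem_filter] at hcX
      rw [hsY, Finset.mem_filter] at hcY
      obtain ⟨b, hb⟩ := hcX.2
      obtain ⟨a, ha⟩ := hcY.2
      have h1' : 0 < r (c, b) := lt_of_le_of_ne (h0 _) (Ne.symm hb)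
      have h2' : 0 < r (a, c) := lt_of_le_of_ne (h0 _) (Ne.symm ha)
      obtain ⟨_, hcc⟩ := pert_claim r h0 hfac h1' h2'
      rw [hd0 c] at hcc
      exact lt_irrefl 0 hcc
    have hcards : sX.card + sY.card ≤ Fintype.card A := by
      rw [← Finset.card_union_of_disjoint hdisj]
      exact Finset.card_le_univ _
    have ha0X : a0 ∈ sX := by
      rw [hsX, Finset.mem_filter]
      exact ⟨Finset.mem_univ _, b0, ne_of_gt hab0⟩
    have hb0Y : b0 ∈ sY := by
      rw [hsY, Finset.mem_filter]
      exact ⟨Finset.mem_univ _, a0, ne_of_gt hab0⟩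
    have hXpos : 1 ≤ sX.card := Finset.card_pos.2 ⟨a0, ha0X⟩
    have hYpos : 1 ≤ sY.card := Finset.card_pos.2 ⟨b0, hb0Y⟩
    -- entropy bounds
    have hbU : Hent (fmap (fun ab : A × A => (ab.1, zf ab)) r) ≤ Real.log sX.card := by
      refine maxent (fun u => fmap_nonneg _ h0 u) hUsum hXpos
        (sX.image (fun a => (a, (0 : Fin 2)))) ?_ (Finset.card_image_le)
      intro u hu
      obtain ⟨ab, hab, habpos⟩ := pos_of_fmap_pos h0 (lt_of_le_of_ne (fmap_nonneg _ h0 u) (Ne.symm hu))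
      have hne : ab.1 ≠ ab.2 := by
        intro hc
        have := habpos
        rw [show ab = (ab.1, ab.2) from rfl, ← hc] at this
        rw [hd0 ab.1] at this
        exact lt_irrefl 0 this
      rw [Finset.mem_image]
      refine ⟨ab.1, ?_, ?_⟩
      · rw [hsX, Finset.mem_filter]
        exact ⟨Finset.mem_univ _, ab.2, by rw [show ((ab.1, ab.2) : A × A) = ab from rfl]; exact ne_of_gt habpos⟩
      · rw [← hab]
        show (ab.1, (0 : Fin 2)) = (ab.1, zf ab)
        rw [show zf ab = 0 from by rw [show ab = (ab.1, ab.2) from rfl]; exact zf_off hne]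
    have hbV : Hent (fmap (fun ab : A × A => (ab.2, zf ab)) r) ≤ Real.log sY.card := by
      refine maxent (fun u => fmap_nonneg _ h0 u) hVsum hYpos
        (sY.image (fun b => (b, (0 : Fin 2)))) ?_ (Finset.card_image_le)
      intro u hu
      obtain ⟨ab, hab, habpos⟩ := pos_of_fmap_pos h0 (lt_of_le_of_ne (fmap_nonneg _ h0 u) (Ne.symm hu))
      have hne : ab.1 ≠ ab.2 := by
        intro hc
        have := habpos
        rw [show ab = (ab.1, ab.2) from rfl, ← hc] at this
        rw [hd0 ab.1] at this
        exact lt_irrefl 0 this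
      rw [Finset.mem_image]
      refine ⟨ab.2, ?_, ?_⟩
      · rw [hsY, Finset.mem_filter]
        exact ⟨Finset.mem_univ _, ab.1, by rw [show ((ab.1, ab.2) : A × A) = ab from rfl]; exact ne_of_gt habpos⟩
      · rw [← hab]
        show (ab.2, (0 : Fin 2)) = (ab.2, zf ab)
        rw [show zf ab = 0 from by rw [show ab = (ab.1, ab.2) from rfl]; exact zf_off hne]
    -- arithmetic
    have hmn : (sX.card : ℝ) * (sY.card : ℝ) ≤ ((Fintype.card A : ℝ) / 2) ^ 2 := by
      have hc : (sX.card : ℝ) + (sY.card : ℝ) ≤ (Fintype.card A : ℝ) := by exact_mod_cast hcards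
      nlinarith [sq_nonneg ((sX.card : ℝ) - (sY.card : ℝ))]
    have hmpos : (0:ℝ) < (sX.card : ℝ) := by exact_mod_cast hXpos
    have hnpos : (0:ℝ) < (sY.card : ℝ) := by exact_mod_cast hYpos
    have hlog : Real.log (sX.card) + Real.log (sY.card) ≤ 2 * Real.log ((Fintype.card A : ℝ) / 2) := by
      rw [← Real.log_mul (ne_of_gt hmpos) (ne_of_gt hnpos)]
      calc Real.log ((sX.card : ℝ) * (sY.card : ℝ))
          ≤ Real.log (((Fintype.card A : ℝ) / 2) ^ 2) := by
            apply Real.log_le_log (by positivity) hmn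
        _ = 2 * Real.log ((Fintype.card A : ℝ) / 2) := by
            rw [Real.log_pow]
            norm_num
    linarith

end pertmain

section global
variable {A T : Type*} [Fintype A] [DecidableEq A] [Fintype T]

lemma global_fin (p : (A × A) × T → ℝ) (h0 : ∀ x, 0 ≤ p x) (h1 : ∑ x, p x = 1)
    (hk2 : 2 ≤ Fintype.card A)
    (hunif : ∀ ab : A × A, fmap Prod.fst p ab
      = ((Fintype.card A : ℝ))⁻¹ * ((Fintype.card A : ℝ))⁻¹)
    (hci : Hent (fmap (fun x : (A × A) × T => ((x.1.1, zf x.1), x.2)) p)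
        + Hent (fmap (fun x : (A × A) × T => ((x.1.2, zf x.1), x.2)) p)
        - Hent (fmap (fun x : (A × A) × T => (((x.1.1, zf x.1), (x.1.2, zf x.1)), x.2)) p)
        - Hent (fmap Prod.snd p) = 0) :
    (Hent (fmap (fun x : (A × A) × T => ((x.1.1, zf x.1), x.2)) p) - Hent (fmap Prod.snd p))
      + (Hent (fmap (fun x : (A × A) × T => ((x.1.2, zf x.1), x.2)) p)
          - Hent (fmap Prod.snd p))
      ≤ 2 * (1 - 1 / (Fintype.card A : ℝ)) * Real.log ((Fintype.card A : ℝ) / 2) := by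
  classical
  set w : T → ℝ := fmap Prod.snd p with hw
  set r : T → A × A → ℝ := fun t ab => p (ab, t) / w t with hr
  have eU := cond_decomp p h0 (fun ab : A × A => (ab.1, zf ab))
  have eV := cond_decomp p h0 (fun ab : A × A => (ab.2, zf ab))
  have eUV := cond_decomp p h0 (fun ab : A × A => ((ab.1, zf ab), (ab.2, zf ab)))
  beta_reduce at eU eV eUV
  rw [eU, eV] at hci ⊢
  rw [eUV] at hci
  -- weights facts
  have hw0 : ∀ t, 0 ≤ w t := fun t => fmap_nonneg _ h0 t
  have hwsum : ∑ t, w t = 1 := by rw [hw, fmap_sum]; exact h1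
  have hr0 : ∀ t ab, 0 ≤ r t ab := fun t ab => div_nonneg (h0 _) (hw0 t)
  have hrsum : ∀ t, w t ≠ 0 → ∑ ab, r t ab = 1 := by
    intro t ht
    rw [hr]
    dsimp only
    rw [← Finset.sum_div, show ∑ ab, p (ab, t) = w t from (fmap_snd p t).symm]
    exact div_self ht
  -- conditional MI terms
  have hci' : ∑ t, w t * (Hent (fmap (fun ab : A × A => (ab.1, zf ab)) (r t))
      + Hent (fmap (fun ab : A × A => (ab.2, zf ab)) (r t))
      - Hent (fmap (fun ab : A × A => ((ab.1, zf ab), (ab.2, zf ab))) (r t))) = 0 := by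
    have : ∀ t, w t * (Hent (fmap (fun ab : A × A => (ab.1, zf ab)) (r t))
        + Hent (fmap (fun ab : A × A => (ab.2, zf ab)) (r t))
        - Hent (fmap (fun ab : A × A => ((ab.1, zf ab), (ab.2, zf ab))) (r t)))
        = w t * Hent (fmap (fun ab : A × A => (ab.1, zf ab)) (r t))
          + w t * Hent (fmap (fun ab : A × A => (ab.2, zf ab)) (r t))
          - w t * Hent (fmap (fun ab : A × A => ((ab.1, zf ab), (ab.2, zf ab))) (r t)) :=
      fun t => by ring
    rw [Finset.sum_congr rfl fun t _ => this t, Finset.sum_sub_distrib, Finset.sum_add_distrib]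
    linarith [hci]
  have hterm0 : ∀ t, w t * (Hent (fmap (fun ab : A × A => (ab.1, zf ab)) (r t))
      + Hent (fmap (fun ab : A × A => (ab.2, zf ab)) (r t))
      - Hent (fmap (fun ab : A × A => ((ab.1, zf ab), (ab.2, zf ab))) (r t))) = 0 := by
    have hnn : ∀ t ∈ Finset.univ, (0:ℝ) ≤ w t * (Hent (fmap (fun ab : A × A => (ab.1, zf ab)) (r t))
        + Hent (fmap (fun ab : A × A => (ab.2, zf ab)) (r t))
        - Hent (fmap (fun ab : A × A => ((ab.1, zf ab), (ab.2, zf ab))) (r t))) := by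
      intro t _
      by_cases ht : w t = 0
      · rw [ht, zero_mul]
      · exact mul_nonneg (hw0 t) (mi_nonneg (r t) (hr0 t) (hrsum t ht) _ _)
    intro t
    exact (Finset.sum_eq_zero_iff_of_nonneg hnn).1 hci' t (Finset.mem_univ t)
  -- per-t inequality
  have hperT : ∀ t ∈ Finset.univ, w t * Hent (fmap (fun ab : A × A => (ab.1, zf ab)) (r t))
      + w t * Hent (fmap (fun ab : A × A => (ab.2, zf ab)) (r t))
      ≤ w t * ((1 - ∑ a, r t (a, a)) * (2 * Real.log ((Fintype.card A : ℝ) / 2))) := by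
    intro t _
    by_cases ht : w t = 0
    · rw [ht, zero_mul, zero_mul, zero_mul]
      norm_num
    · have hI : Hent (fmap (fun ab : A × A => (ab.1, zf ab)) (r t))
          + Hent (fmap (fun ab : A × A => (ab.2, zf ab)) (r t))
          - Hent (fmap (fun ab : A × A => ((ab.1, zf ab), (ab.2, zf ab))) (r t)) = 0 := by
        rcases mul_eq_zero.1 (hterm0 t) with h | h
        · exact absurd h ht
        · exact h
      have := pert_main (r t) (hr0 t) (hrsum t ht) hk2 hI
      calc w t * Hent (fmap (fun ab : A × A => (ab.1, zf ab)) (r t))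
          + w t * Hent (fmap (fun ab : A × A => (ab.2, zf ab)) (r t))
          = w t * (Hent (fmap (fun ab : A × A => (ab.1, zf ab)) (r t))
            + Hent (fmap (fun ab : A × A => (ab.2, zf ab)) (r t))) := by ring
        _ ≤ w t * ((1 - ∑ a, r t (a, a)) * (2 * Real.log ((Fintype.card A : ℝ) / 2))) :=
          mul_le_mul_of_nonneg_left this (hw0 t)
  -- diagonal mass
  have hkpos : (0:ℝ) < (Fintype.card A : ℝ) := by
    have : 0 < Fintype.card A := lt_of_lt_of_le (by norm_num) hk2
    exact_mod_cast this
  have hdiagmass : ∑ t, ∑ a, p ((a, a), t) = (Fintype.card A : ℝ)⁻¹ := by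
    rw [Finset.sum_comm]
    have : ∀ a : A, ∑ t, p ((a, a), t) = (Fintype.card A : ℝ)⁻¹ * (Fintype.card A : ℝ)⁻¹ :=
      fun a => by rw [← fmap_fst, hunif]
    rw [Finset.sum_congr rfl fun a _ => this a, Finset.sum_const, Finset.card_univ, nsmul_eq_mul]
    rw [← mul_assoc, mul_inv_cancel₀ (ne_of_gt hkpos), one_mul]
  have hwd : ∑ t, w t * (∑ a, r t (a, a)) = (Fintype.card A : ℝ)⁻¹ := by
    rw [← hdiagmass]
    refine Finset.sum_congr rfl fun t _ => ?_
    rw [Finset.mul_sum]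
    refine Finset.sum_congr rfl fun a _ => ?_
    by_cases ht : w t = 0
    · rw [ht, zero_mul, slice_zero h0 ht]
    · rw [hr]
      dsimp only
      rw [mul_div_cancel₀ _ ht]
  -- conclude
  have final := Finset.sum_le_sum hperT
  rw [Finset.sum_add_distrib] at final
  have hRHS : ∑ t, w t * ((1 - ∑ a, r t (a, a)) * (2 * Real.log ((Fintype.card A : ℝ) / 2)))
      = 2 * (1 - 1 / (Fintype.card A : ℝ)) * Real.log ((Fintype.card A : ℝ) / 2) := by
    have : ∀ t, w t * ((1 - ∑ a, r t (a, a)) * (2 * Real.log ((Fintype.card A : ℝ) / 2)))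
        = (w t - w t * (∑ a, r t (a, a))) * (2 * Real.log ((Fintype.card A : ℝ) / 2)) :=
      fun t => by ring
    rw [Finset.sum_congr rfl fun t _ => this t, ← Finset.sum_mul, Finset.sum_sub_distrib,
      hwsum, hwd]
    field_simp
  rw [hRHS] at final
  linarith [final]

end global

section bridge
variable {Ω S S' : Type*} [MeasurableSpace Ω] (μ : Measure Ω) [IsProbabilityMeasure μ]
  [Fintype S] [MeasurableSpace S] [MeasurableSingletonClass S] [Fintype S']

set_option linter.unusedSectionVars false

lemma pm_map (W : Ω → S) (hW : Measurable W) (g : S → S') (y : S') :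
    pm μ (fun ω => g (W ω)) y = fmap g (pm μ W) y := by
  classical
  have hpre : (fun ω => g (W ω)) ⁻¹' {y}
      = ⋃ x ∈ Finset.univ.filter (fun x => g x = y), W ⁻¹' {x} := by
    ext ω
    simp only [Set.mem_preimage, Set.mem_singleton_iff, Set.mem_iUnion, Finset.mem_filter,
      Finset.mem_univ, true_and]
    exact ⟨fun h => ⟨W ω, h, rfl⟩, fun ⟨x, hx, hWx⟩ => by rw [hWx]; exact hx⟩
  rw [pm, hpre, measure_biUnion_finset ?disj ?meas]
  case disj =>
    intro x _ x' _ hne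
    refine Set.disjoint_left.2 fun ω h1 h2 => hne ?_
    rw [Set.mem_preimage, Set.mem_singleton_iff] at h1 h2
    rw [← h1, ← h2]
  case meas => exact fun x _ => hW (measurableSet_singleton x)
  rw [ENNReal.toReal_sum (fun x _ => measure_ne_top μ _)]
  rw [fmap_apply, ← Finset.sum_filter]
  rfl

lemma sum_pm (W : Ω → S) (hW : Measurable W) : ∑ x, pm μ W x = 1 := by
  classical
  have h := pm_map μ W hW (fun _ => ()) ()
  have h1 : pm μ (fun _ : Ω => ()) () = 1 := by
    rw [pm]
    have hu : (fun _ : Ω => ()) ⁻¹' {()} = Set.univ := by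
      ext ω; simp
    rw [hu, measure_univ, ENNReal.toReal_one]
  have h2 : fmap (fun _ : S => ()) (pm μ W) () = ∑ x, pm μ W x := by
    rw [fmap_apply]
    simp
  rw [← h2, ← h, h1]

lemma entH_comp (W : Ω → S) (hW : Measurable W) (g : S → S') :
    entH μ (fun ω => g (W ω)) = Hent (fmap g (pm μ W)) := by
  rw [entH, Hent]
  exact Finset.sum_congr rfl fun x _ => by rw [pm_map μ W hW g x]

end bridge

/-- `k`-ary EQ, `k` even: with `U = (X,Z)`, `V = (Y,Z)`, every finite-valued `Q` with
`I(U ; V | Q) = 0` satisfies `H(U|Q) + H(V|Q) ≤ 2 (1 − 1/k) log (k/2)`. -/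
theorem even_k_EQ_wyner_upper_bound
    {Ω : Type*} [MeasurableSpace Ω] (μ : Measure Ω) [IsProbabilityMeasure μ]
    (k : ℕ) (hk : Even k) (hk2 : 2 ≤ k)
    {A : Type*} [Fintype A] [DecidableEq A]
    [MeasurableSpace A] [MeasurableSingletonClass A] (hA : Fintype.card A = k)
    (X Y : Ω → A) (hX : Measurable X) (hY : Measurable Y)
    (hindep : IndepFun X Y μ)
    (hXunif : ∀ a : A, μ (X ⁻¹' {a}) = (k : ℝ≥0∞)⁻¹)
    (hYunif : ∀ a : A, μ (Y ⁻¹' {a}) = (k : ℝ≥0∞)⁻¹)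
    (Z : Ω → Fin 2) (hZ : Z = fun ω => if X ω = Y ω then 1 else 0)
    {T : Type*} [Fintype T] [MeasurableSpace T] [MeasurableSingletonClass T]
    (Q : Ω → T) (hQ : Measurable Q)
    (hQci : condMutInf μ (fun ω => (X ω, Z ω)) (fun ω => (Y ω, Z ω)) Q = 0) :
    condEnt μ (fun ω => (X ω, Z ω)) Q + condEnt μ (fun ω => (Y ω, Z ω)) Q
      ≤ 2 * (1 - 1 / (k : ℝ)) * Real.log ((k : ℝ) / 2) := by
  classical
  subst hZ
  have hk2' : 2 ≤ Fintype.card A := by rw [hA]; exact hk2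
  set W : Ω → (A × A) × T := fun ω => ((X ω, Y ω), Q ω) with hWdef
  have hW : Measurable W := (hX.prodMk hY).prodMk hQ
  set p : (A × A) × T → ℝ := pm μ W with hpdef
  have h0 : ∀ x, 0 ≤ p x := fun x => ENNReal.toReal_nonneg
  have h1 : ∑ x, p x = 1 := sum_pm μ W hW
  have hunif : ∀ ab : A × A, fmap Prod.fst p ab
      = ((Fintype.card A : ℝ))⁻¹ * ((Fintype.card A : ℝ))⁻¹ := by
    rintro ⟨a, b⟩
    rw [← pm_map μ W hW Prod.fst (a, b), hA]
    have hpre : (fun ω => (X ω, Y ω)) ⁻¹' {(a, b)} = X ⁻¹' {a} ∩ Y ⁻¹' {b} := by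
      ext ω; simp [Prod.ext_iff]
    show (μ ((fun ω => (X ω, Y ω)) ⁻¹' {(a, b)})).toReal = _
    rw [hpre, hindep.measure_inter_preimage_eq_mul {a} {b} (measurableSet_singleton a)
      (measurableSet_singleton b), hXunif, hYunif, ENNReal.toReal_mul]
    congr 1 <;> simp
  have e1 : entH μ (fun ω => ((X ω, if X ω = Y ω then (1 : Fin 2) else 0), Q ω))
      = Hent (fmap (fun x : (A × A) × T => ((x.1.1, zf x.1), x.2)) p) :=
    entH_comp μ W hW (fun x : (A × A) × T => ((x.1.1, zf x.1), x.2))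
  have e2 : entH μ (fun ω => ((Y ω, if X ω = Y ω then (1 : Fin 2) else 0), Q ω))
      = Hent (fmap (fun x : (A × A) × T => ((x.1.2, zf x.1), x.2)) p) :=
    entH_comp μ W hW (fun x : (A × A) × T => ((x.1.2, zf x.1), x.2))
  have e3 : entH μ (fun ω => (((X ω, if X ω = Y ω then (1 : Fin 2) else 0),
        (Y ω, if X ω = Y ω then (1 : Fin 2) else 0)), Q ω))
      = Hent (fmap (fun x : (A × A) × T => (((x.1.1, zf x.1), (x.1.2, zf x.1)), x.2)) p) :=
    entH_comp μ W hW (fun x : (A × A) × T => (((x.1.1, zf x.1), (x.1.2, zf x.1)), x.2))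
  have e4 : entH μ Q = Hent (fmap Prod.snd p) :=
    entH_comp μ W hW Prod.snd
  simp only [condMutInf] at hQci
  simp only [condEnt]
  rw [e1, e2, e3, e4] at hQci
  rw [e1, e2, e4]
  have := global_fin p h0 h1 hk2' hunif hQci
  rwa [hA] at this
end

section
/- Let k ≥ 2 be an even integer. Let X and Y be independent random variables, each uniformly distributed on a k-element alphabet, and let Z = 1 if X = Y and Z = 0 otherwise. Let M be any finite-valued random variable on the same probability space with I(X ; Y | M) = 0, H(Z | (M, X)) = 0 and H(Z | (M, Y)) = 0. Then I(X ; M | Y) + I(Y ; M | X) ≥ 2 log 2 + (2/k) · log(k/2). -/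
open MeasureTheory ProbabilityTheory Real
open scoped ENNReal

open Finset

namespace EQaux

variable {ι : Type*} [Fintype ι]

lemma gibbs_le (p q : ι → ℝ) (hp : ∀ i, 0 ≤ p i) (hq : ∀ i, 0 ≤ q i)
    (hdom : ∀ i, q i = 0 → p i = 0) (hsum : ∑ i, p i = ∑ i, q i) :
    ∑ i, p i * (Real.log (q i) - Real.log (p i)) ≤ 0 := by
  have key : ∀ i, p i * (Real.log (q i) - Real.log (p i)) ≤ q i - p i := by
    intro i
    rcases eq_or_lt_of_le (hp i) with h0 | h0
    · simp [← h0]; exact hq i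
    · have hqi : 0 < q i := by
        rcases eq_or_lt_of_le (hq i) with h1 | h1
        · exact absurd (hdom i h1.symm) (by linarith)
        · exact h1
      have : Real.log (q i) - Real.log (p i) = Real.log (q i / p i) := by
        rw [Real.log_div hqi.ne' h0.ne']
      rw [this]
      have hlog := Real.log_le_sub_one_of_pos (div_pos hqi h0)
      calc p i * Real.log (q i / p i) ≤ p i * (q i / p i - 1) := by
            exact mul_le_mul_of_nonneg_left hlog (le_of_lt h0)
        _ = q i - p i := by field_simp
  calc ∑ i, p i * (Real.log (q i) - Real.log (p i)) ≤ ∑ i, (q i - p i) :=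
        Finset.sum_le_sum fun i _ => key i
    _ = 0 := by rw [Finset.sum_sub_distrib, hsum, sub_self]

lemma gibbs_eq (p q : ι → ℝ) (hp : ∀ i, 0 ≤ p i) (hq : ∀ i, 0 ≤ q i)
    (hdom : ∀ i, q i = 0 → p i = 0) (hsum : ∑ i, p i = ∑ i, q i)
    (heq : ∑ i, p i * (Real.log (q i) - Real.log (p i)) = 0) :
    ∀ i, p i = q i := by
  have key : ∀ i ∈ Finset.univ, p i * (Real.log (q i) - Real.log (p i)) ≤ q i - p i := by
    intro i _
    rcases eq_or_lt_of_le (hp i) with h0 | h0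
    · simp [← h0]; exact hq i
    · have hqi : 0 < q i := by
        rcases eq_or_lt_of_le (hq i) with h1 | h1
        · exact absurd (hdom i h1.symm) (by linarith)
        · exact h1
      have hld : Real.log (q i) - Real.log (p i) = Real.log (q i / p i) := by
        rw [Real.log_div hqi.ne' h0.ne']
      rw [hld]
      have hlog := Real.log_le_sub_one_of_pos (div_pos hqi h0)
      calc p i * Real.log (q i / p i) ≤ p i * (q i / p i - 1) :=
            mul_le_mul_of_nonneg_left hlog (le_of_lt h0)
        _ = q i - p i := by field_simp
  have hsums : ∑ i, p i * (Real.log (q i) - Real.log (p i)) = ∑ i, (q i - p i) := by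
    rw [heq, Finset.sum_sub_distrib, hsum, sub_self]
  have hterm := (Finset.sum_eq_sum_iff_of_le key).mp hsums
  intro i
  have hi := hterm i (Finset.mem_univ i)
  rcases eq_or_lt_of_le (hp i) with h0 | h0
  · -- p i = 0, so q i - p i = 0
    simp [← h0] at hi ⊢
    linarith [hi]
  · have hqi : 0 < q i := by
      rcases eq_or_lt_of_le (hq i) with h1 | h1
      · exact absurd (hdom i h1.symm) (by linarith)
      · exact h1
    by_contra hne
    have hratio : q i / p i ≠ 1 := by
      intro h
      exact hne ((div_eq_one_iff_eq h0.ne').mp h).symm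
    have hlog := Real.log_lt_sub_one_of_pos (div_pos hqi h0) hratio
    have hld : Real.log (q i) - Real.log (p i) = Real.log (q i / p i) := by
      rw [Real.log_div hqi.ne' h0.ne']
    rw [hld] at hi
    have : p i * Real.log (q i / p i) < p i * (q i / p i - 1) :=
      mul_lt_mul_of_pos_left hlog h0
    have heqq : p i * (q i / p i - 1) = q i - p i := by field_simp
    linarith [hi, heqq ▸ this]

lemma sum_negMulLog_le_log_card (w : ι → ℝ) (hw : ∀ i, 0 ≤ w i) (s : Finset ι)
    (hsupp : ∀ i, w i ≠ 0 → i ∈ s) (c : ℝ) (hc : 0 < c) (hsum : ∑ i, w i = c)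
    (hs : s.Nonempty) :
    ∑ i, Real.negMulLog (w i) ≤ Real.negMulLog c + c * Real.log (s.card : ℝ) := by
  classical
  have hcard : 0 < (s.card : ℝ) := by exact_mod_cast Finset.card_pos.mpr hs
  set q : ι → ℝ := fun i => if i ∈ s then c / (s.card : ℝ) else 0 with hqdef
  have hsumq : ∑ i, q i = c := by
    rw [hqdef]
    rw [Finset.sum_ite_mem, Finset.univ_inter, Finset.sum_const, nsmul_eq_mul]
    field_simp
  have hg := gibbs_le w q hw (fun i => by
      rw [hqdef]; dsimp only; split
      · positivity
      · exact le_refl 0)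
    (fun i hqi => by
      by_contra hwi
      have := hsupp i hwi
      rw [hqdef] at hqi; simp only [this, if_true] at hqi
      have : c / (s.card : ℝ) > 0 := by positivity
      linarith)
    (by rw [hsum, hsumq])
  have hlogq : ∀ i, w i * Real.log (q i) = w i * Real.log (c / (s.card : ℝ)) := by
    intro i
    by_cases hi : i ∈ s
    · rw [hqdef]; simp [hi]
    · have : w i = 0 := by
        by_contra hwi; exact hi (hsupp i hwi)
      simp [this]
  have hexp : ∑ i, w i * (Real.log (q i) - Real.log (w i))
      = c * Real.log (c / (s.card : ℝ)) + ∑ i, Real.negMulLog (w i) := by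
    have : ∀ i ∈ Finset.univ, w i * (Real.log (q i) - Real.log (w i))
        = w i * Real.log (c / (s.card : ℝ)) + Real.negMulLog (w i) := by
      intro i _
      rw [mul_sub, hlogq i, Real.negMulLog]
      ring
    rw [Finset.sum_congr rfl this, Finset.sum_add_distrib, ← Finset.sum_mul, hsum]
  rw [hexp] at hg
  have hld : Real.log (c / (s.card : ℝ)) = Real.log c - Real.log (s.card : ℝ) :=
    Real.log_div hc.ne' hcard.ne'
  rw [hld] at hg
  have hnc : Real.negMulLog c = -(c * Real.log c) := by rw [Real.negMulLog]; ring
  linarith [hg]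





lemma negMulLog_split (u v : ℝ) (hu : 0 ≤ u) (hv : 0 ≤ v) :
    Real.negMulLog u + Real.negMulLog v - Real.negMulLog (u + v)
      = u * (Real.log (u + v) - Real.log u) + v * (Real.log (u + v) - Real.log v) := by
  simp only [Real.negMulLog]; ring

lemma negMulLog_add_le (u v : ℝ) (hu : 0 ≤ u) (hv : 0 ≤ v) :
    0 ≤ Real.negMulLog u + Real.negMulLog v - Real.negMulLog (u + v) := by
  rw [negMulLog_split u v hu hv]
  have h1 : 0 ≤ u * (Real.log (u + v) - Real.log u) := by
    rcases eq_or_lt_of_le hu with h | h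
    · simp [← h]
    · have : Real.log u ≤ Real.log (u + v) := Real.log_le_log h (by linarith)
      nlinarith
  have h2 : 0 ≤ v * (Real.log (u + v) - Real.log v) := by
    rcases eq_or_lt_of_le hv with h | h
    · simp [← h]
    · have : Real.log v ≤ Real.log (u + v) := Real.log_le_log h (by linarith)
      nlinarith
  linarith

lemma negMulLog_add_eq (u v : ℝ) (hu : 0 ≤ u) (hv : 0 ≤ v)
    (heq : Real.negMulLog u + Real.negMulLog v - Real.negMulLog (u + v) = 0) :
    u = 0 ∨ v = 0 := by
  by_contra hcon
  push_neg at hcon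
  obtain ⟨hu0, hv0⟩ := hcon
  have hup : 0 < u := lt_of_le_of_ne hu (Ne.symm hu0)
  have hvp : 0 < v := lt_of_le_of_ne hv (Ne.symm hv0)
  rw [negMulLog_split u v hu hv] at heq
  have h1 : 0 < u * (Real.log (u + v) - Real.log u) := by
    have : Real.log u < Real.log (u + v) := Real.log_lt_log hup (by linarith)
    nlinarith
  have h2 : 0 ≤ v * (Real.log (u + v) - Real.log v) := by
    have : Real.log v ≤ Real.log (u + v) := Real.log_le_log hvp (by linarith)
    nlinarith
  linarith

variable {α β : Type*} [Fintype α] [Fintype β]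

/-- unnormalized mutual information nonnegativity with equality case. -/
lemma mutual_info_aux (P : α → β → ℝ) (hP : ∀ x y, 0 ≤ P x y) (c : ℝ) (hc : 0 < c)
    (hsum : ∑ x, ∑ y, P x y = c) :
    0 ≤ (∑ x, Real.negMulLog (∑ y, P x y)) + (∑ y, Real.negMulLog (∑ x, P x y))
        - (∑ x, ∑ y, Real.negMulLog (P x y)) - Real.negMulLog c
    ∧ ((∑ x, Real.negMulLog (∑ y, P x y)) + (∑ y, Real.negMulLog (∑ x, P x y))
        - (∑ x, ∑ y, Real.negMulLog (P x y)) - Real.negMulLog c = 0 →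
        ∀ x y, c * P x y = (∑ y', P x y') * (∑ x', P x' y)) := by
  classical
  set a : α → ℝ := fun x => ∑ y, P x y with ha
  set b : β → ℝ := fun y => ∑ x, P x y with hb
  have haP : ∀ x y, P x y ≤ a x := fun x y =>
    Finset.single_le_sum (fun y' _ => hP x y') (Finset.mem_univ y)
  have hbP : ∀ x y, P x y ≤ b y := fun x y =>
    Finset.single_le_sum (fun x' _ => hP x' y) (Finset.mem_univ x)
  have han : ∀ x, 0 ≤ a x := fun x => Finset.sum_nonneg fun y _ => hP x y
  have hbn : ∀ y, 0 ≤ b y := fun y => Finset.sum_nonneg fun x _ => hP x y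
  have hsa : ∑ x, a x = c := hsum
  have hsb : ∑ y, b y = c := by rw [hb]; rw [← hsum]; exact Finset.sum_comm
  -- gibbs over α × β
  set p : α × β → ℝ := fun z => P z.1 z.2 with hp
  set q : α × β → ℝ := fun z => a z.1 * b z.2 / c with hq
  have hpn : ∀ z, 0 ≤ p z := fun z => hP z.1 z.2
  have hqn : ∀ z, 0 ≤ q z := fun z => by
    rw [hq]; exact div_nonneg (mul_nonneg (han z.1) (hbn z.2)) hc.le
  have hdom : ∀ z, q z = 0 → p z = 0 := by
    intro z hz
    rw [hq] at hz
    dsimp only at hz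
    rcases mul_eq_zero.mp ((div_eq_zero_iff.mp hz).resolve_right hc.ne') with h | h
    · exact le_antisymm (h ▸ haP z.1 z.2) (hpn z)
    · exact le_antisymm (h ▸ hbP z.1 z.2) (hpn z)
  have hsump : ∑ z : α × β, p z = c := by
    rw [hp, Fintype.sum_prod_type]; exact hsum
  have hsumq : ∑ z : α × β, q z = c := by
    rw [hq]
    rw [Fintype.sum_prod_type]
    have : ∀ x, ∑ y, a x * b y / c = a x * c / c := by
      intro x
      rw [← Finset.sum_div, ← Finset.mul_sum, hsb]
    rw [Finset.sum_congr rfl (fun x _ => this x)]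
    rw [← Finset.sum_div, ← Finset.sum_mul, hsa]
    field_simp
  -- key identity: the gibbs sum equals minus our expression
  have hkey : ∑ z : α × β, p z * (Real.log (q z) - Real.log (p z))
      = -((∑ x, Real.negMulLog (a x)) + (∑ y, Real.negMulLog (b y))
        - (∑ x, ∑ y, Real.negMulLog (P x y)) - Real.negMulLog c) := by
    have hterm : ∀ z : α × β, p z * (Real.log (q z) - Real.log (p z))
        = p z * Real.log (a z.1) + p z * Real.log (b z.2) - p z * Real.log c
          - p z * Real.log (p z) := by
      intro z
      rcases eq_or_lt_of_le (hpn z) with h0 | h0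
      · rw [← h0]; simp
      · have hax : 0 < a z.1 := lt_of_lt_of_le h0 (haP z.1 z.2)
        have hby : 0 < b z.2 := lt_of_lt_of_le h0 (hbP z.1 z.2)
        have : Real.log (q z) = Real.log (a z.1) + Real.log (b z.2) - Real.log c := by
          rw [hq]
          dsimp only
          rw [Real.log_div (by positivity) hc.ne', Real.log_mul hax.ne' hby.ne']
        rw [this]; ring
    rw [Finset.sum_congr rfl (fun z _ => hterm z)]
    have e1 : ∑ z : α × β, p z * Real.log (a z.1) = -∑ x, Real.negMulLog (a x) := by
      rw [Fintype.sum_prod_type]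
      simp only [Real.negMulLog, neg_mul, Finset.sum_neg_distrib, neg_neg]
      refine Finset.sum_congr rfl fun x _ => ?_
      rw [← Finset.sum_mul]
    have e2 : ∑ z : α × β, p z * Real.log (b z.2) = -∑ y, Real.negMulLog (b y) := by
      rw [Fintype.sum_prod_type, Finset.sum_comm]
      simp only [Real.negMulLog, neg_mul, Finset.sum_neg_distrib, neg_neg]
      refine Finset.sum_congr rfl fun y _ => ?_
      rw [← Finset.sum_mul]
    have e3 : ∑ z : α × β, p z * Real.log c = c * Real.log c := by
      rw [← Finset.sum_mul, hsump]
    have e4 : ∑ z : α × β, p z * Real.log (p z) = -∑ x, ∑ y, Real.negMulLog (P x y) := by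
      rw [Fintype.sum_prod_type]
      simp only [Real.negMulLog, neg_mul, Finset.sum_neg_distrib, neg_neg]
      rfl
    simp only [Finset.sum_sub_distrib, Finset.sum_add_distrib]
    rw [e1, e2, e3, e4]
    simp only [Real.negMulLog]
    ring
  constructor
  · have := gibbs_le p q hpn hqn hdom (by rw [hsump, hsumq])
    rw [hkey] at this
    linarith
  · intro heq
    have hzero : ∑ z : α × β, p z * (Real.log (q z) - Real.log (p z)) = 0 := by
      rw [hkey, heq, neg_zero]
    have := gibbs_eq p q hpn hqn hdom (by rw [hsump, hsumq]) hzero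
    intro x y
    have hxy := this (x, y)
    rw [hp, hq] at hxy
    dsimp only at hxy
    rw [hxy]
    field_simp
    rfl


-- measure helpers
open MeasureTheory

lemma measure_eq_sum_fiber {Ω S : Type*} [MeasurableSpace Ω] [Fintype S] [MeasurableSpace S]
    [MeasurableSingletonClass S] (μ : MeasureTheory.Measure Ω) (W : Ω → S) (hW : Measurable W)
    (s : Set Ω) (hs : MeasurableSet s) :
    μ s = ∑ w : S, μ (s ∩ W ⁻¹' {w}) := by
  classical
  have hcover : s = ⋃ w ∈ (Finset.univ : Finset S), s ∩ W ⁻¹' {w} := by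
    ext ω
    simp only [Set.mem_iUnion, Set.mem_inter_iff, Set.mem_preimage, Set.mem_singleton_iff]
    constructor
    · intro h; exact ⟨W ω, Finset.mem_univ _, h, rfl⟩
    · rintro ⟨w, _, h, _⟩; exact h
  have hd : (((Finset.univ : Finset S) : Set S)).PairwiseDisjoint (fun w => s ∩ W ⁻¹' {w}) := by
    intro w _ w' _ hww'
    apply Set.disjoint_left.mpr
    rintro ω ⟨_, hw⟩ ⟨_, hw'⟩
    exact hww' (hw.symm.trans hw')
  have hm : ∀ b ∈ (Finset.univ : Finset S), MeasurableSet (s ∩ W ⁻¹' {b}) :=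
    fun b _ => hs.inter (hW (measurableSet_singleton b))
  conv_lhs => rw [hcover]
  exact measure_biUnion_finset hd hm

lemma entH_comp_inj {Ω S S' : Type*} [MeasurableSpace Ω] (μ : MeasureTheory.Measure Ω)
    [Fintype S] [Fintype S'] (W : Ω → S) (f : S → S') (hf : Function.Injective f) :
    entH μ (fun ω => f (W ω)) = entH μ W := by
  classical
  unfold entH
  have hzero : ∀ s' ∈ (Finset.univ.image f)ᶜ, Real.negMulLog (pm μ (fun ω => f (W ω)) s') = 0 := by
    intro s' hs'
    have : (fun ω => f (W ω)) ⁻¹' {s'} = ∅ := by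
      ext ω
      simp only [Set.mem_preimage, Set.mem_singleton_iff, Set.mem_empty_iff_false, iff_false]
      intro h
      simp only [Finset.mem_compl, Finset.mem_image] at hs'
      exact hs' ⟨W ω, Finset.mem_univ _, h⟩
    rw [pm, this]
    simp
  rw [← Finset.sum_add_sum_compl (Finset.univ.image f), Finset.sum_eq_zero hzero, add_zero]
  rw [Finset.sum_image (fun s _ t _ h => hf h)]
  refine Finset.sum_congr rfl fun s _ => ?_
  have : (fun ω => f (W ω)) ⁻¹' {f s} = W ⁻¹' {s} := by
    ext ω
    simp [hf.eq_iff]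
  rw [pm, this, pm]

lemma sum_sum_eq_zero {ι κ : Type*} [Fintype ι] [Fintype κ] (f : ι → κ → ℝ)
    (h : ∀ i j, 0 ≤ f i j) (hz : ∑ i, ∑ j, f i j = 0) : ∀ i j, f i j = 0 := by
  have houter : ∀ i ∈ Finset.univ, (0:ℝ) ≤ ∑ j, f i j :=
    fun i _ => Finset.sum_nonneg fun j _ => h i j
  have h1 := (Finset.sum_eq_zero_iff_of_nonneg houter).mp hz
  intro i j
  exact (Finset.sum_eq_zero_iff_of_nonneg (fun j _ => h i j)).mp
    (h1 i (Finset.mem_univ i)) j (Finset.mem_univ j)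

end EQaux

open EQaux

set_option maxHeartbeats 2000000 in
/-- `k`-ary EQ lower bound, `k` even: for any finite-valued `M` with `I(X ; Y | M) = 0`,
`H(Z | (M,X)) = 0` and `H(Z | (M,Y)) = 0`,
`I(X ; M | Y) + I(Y ; M | X) ≥ 2 log 2 + (2/k) log (k/2)`. -/
theorem even_k_EQ_information_cost_lower_bound
    {Ω : Type*} [MeasurableSpace Ω] (μ : Measure Ω) [IsProbabilityMeasure μ]
    (k : ℕ) (hk : Even k) (hk2 : 2 ≤ k)
    {A : Type*} [Fintype A] [DecidableEq A]
    [MeasurableSpace A] [MeasurableSingletonClass A] (hA : Fintype.card A = k)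
    (X Y : Ω → A) (hX : Measurable X) (hY : Measurable Y)
    (hindep : IndepFun X Y μ)
    (hXunif : ∀ a : A, μ (X ⁻¹' {a}) = (k : ℝ≥0∞)⁻¹)
    (hYunif : ∀ a : A, μ (Y ⁻¹' {a}) = (k : ℝ≥0∞)⁻¹)
    (Z : Ω → Fin 2) (hZ : Z = fun ω => if X ω = Y ω then 1 else 0)
    {T : Type*} [Fintype T] [MeasurableSpace T] [MeasurableSingletonClass T]
    (M : Ω → T) (hM : Measurable M)
    (hXY : condMutInf μ X Y M = 0)
    (hZX : condEnt μ Z (fun ω => (M ω, X ω)) = 0)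
    (hZY : condEnt μ Z (fun ω => (M ω, Y ω)) = 0) :
    condMutInf μ X M Y + condMutInf μ Y M X
      ≥ 2 * Real.log 2 + (2 / (k : ℝ)) * Real.log ((k : ℝ) / 2) := by
  classical
  subst hZ
  have hk0 : (0 : ℝ) < (k : ℝ) := by
    have : (0:ℕ) < k := by omega
    exact_mod_cast this
  have hkinv : ((k : ℝ≥0∞)⁻¹).toReal = (k : ℝ)⁻¹ := by
    rw [ENNReal.toReal_inv]
    simp
  have hMm : ∀ m : T, MeasurableSet (M ⁻¹' {m}) := fun m => hM (measurableSet_singleton m)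
  have hXx : ∀ x : A, MeasurableSet (X ⁻¹' {x}) := fun x => hX (measurableSet_singleton x)
  have hYy : ∀ y : A, MeasurableSet (Y ⁻¹' {y}) := fun y => hY (measurableSet_singleton y)
  set p : T → A → A → ℝ := fun m x y => (μ (M ⁻¹' {m} ∩ X ⁻¹' {x} ∩ Y ⁻¹' {y})).toReal
    with hpdef
  have hpnn : ∀ m x y, 0 ≤ p m x y := fun m x y => ENNReal.toReal_nonneg
  set a : T → A → ℝ := fun m x => ∑ y, p m x y with hadef
  set b : T → A → ℝ := fun m y => ∑ x, p m x y with hbdef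
  set q : T → ℝ := fun m => ∑ x, ∑ y, p m x y with hqdef
  have hann : ∀ m x, 0 ≤ a m x := fun m x => Finset.sum_nonneg fun y _ => hpnn m x y
  have hbnn : ∀ m y, 0 ≤ b m y := fun m y => Finset.sum_nonneg fun x _ => hpnn m x y
  have hqnn : ∀ m, 0 ≤ q m := fun m =>
    Finset.sum_nonneg fun x _ => Finset.sum_nonneg fun y _ => hpnn m x y
  have hpa : ∀ m x y, p m x y ≤ a m x := fun m x y =>
    Finset.single_le_sum (fun y' _ => hpnn m x y') (Finset.mem_univ y)
  have hpb : ∀ m x y, p m x y ≤ b m y := fun m x y =>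
    Finset.single_le_sum (fun x' _ => hpnn m x' y) (Finset.mem_univ x)
  -- pm computations
  have pmMX : ∀ m x, pm μ (fun ω => (M ω, X ω)) (m, x) = a m x := by
    intro m x
    have hset : (fun ω => (M ω, X ω)) ⁻¹' {(m, x)} = M ⁻¹' {m} ∩ X ⁻¹' {x} := by
      ext ω; simp [Prod.ext_iff]
    rw [pm, hset, measure_eq_sum_fiber μ Y hY _ ((hMm m).inter (hXx x)),
      ENNReal.toReal_sum (fun y _ => measure_ne_top μ _)]
  have pmMY : ∀ m y, pm μ (fun ω => (M ω, Y ω)) (m, y) = b m y := by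
    intro m y
    have hset : (fun ω => (M ω, Y ω)) ⁻¹' {(m, y)} = M ⁻¹' {m} ∩ Y ⁻¹' {y} := by
      ext ω; simp [Prod.ext_iff]
    rw [pm, hset, measure_eq_sum_fiber μ X hX _ ((hMm m).inter (hYy y)),
      ENNReal.toReal_sum (fun x _ => measure_ne_top μ _)]
    refine Finset.sum_congr rfl fun x _ => ?_
    have hset2 : M ⁻¹' {m} ∩ Y ⁻¹' {y} ∩ X ⁻¹' {x} = M ⁻¹' {m} ∩ X ⁻¹' {x} ∩ Y ⁻¹' {y} := by
      ext ω
      simp only [Set.mem_inter_iff, Set.mem_preimage, Set.mem_singleton_iff]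
      tauto
    rw [hset2]
  have pmM : ∀ m, pm μ M m = q m := by
    intro m
    rw [pm, measure_eq_sum_fiber μ X hX _ (hMm m),
      ENNReal.toReal_sum (fun x _ => measure_ne_top μ _)]
    refine Finset.sum_congr rfl fun x _ => ?_
    rw [measure_eq_sum_fiber μ Y hY _ ((hMm m).inter (hXx x)),
      ENNReal.toReal_sum (fun y _ => measure_ne_top μ _)]
  have pmV : ∀ m x y, pm μ (fun ω => (M ω, X ω, Y ω)) (m, x, y) = p m x y := by
    intro m x y
    have hset : (fun ω => (M ω, X ω, Y ω)) ⁻¹' {(m, x, y)}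
        = M ⁻¹' {m} ∩ X ⁻¹' {x} ∩ Y ⁻¹' {y} := by
      ext ω
      simp only [Set.mem_preimage, Set.mem_singleton_iff, Prod.ext_iff,
        Set.mem_inter_iff]
      tauto
    rw [pm, hset]
  have summ : ∀ x y, ∑ m, p m x y = (k : ℝ)⁻¹ * (k : ℝ)⁻¹ := by
    intro x y
    have h1 : ∑ m, p m x y = (μ (X ⁻¹' {x} ∩ Y ⁻¹' {y})).toReal := by
      rw [measure_eq_sum_fiber μ M hM _ ((hXx x).inter (hYy y)),
        ENNReal.toReal_sum (fun m _ => measure_ne_top μ _)]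
      refine Finset.sum_congr rfl fun m _ => ?_
      have hset2 : X ⁻¹' {x} ∩ Y ⁻¹' {y} ∩ M ⁻¹' {m} = M ⁻¹' {m} ∩ X ⁻¹' {x} ∩ Y ⁻¹' {y} := by
        ext ω
        simp only [Set.mem_inter_iff, Set.mem_preimage, Set.mem_singleton_iff]
        tauto
      rw [hset2]
    rw [h1, hindep.measure_inter_preimage_eq_mul _ _ (measurableSet_singleton x)
      (measurableSet_singleton y), hXunif, hYunif, ENNReal.toReal_mul, hkinv]
  have pmXY : ∀ x y, pm μ (fun ω => (X ω, Y ω)) (x, y) = (k : ℝ)⁻¹ * (k : ℝ)⁻¹ := by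
    intro x y
    have hset : (fun ω => (X ω, Y ω)) ⁻¹' {(x, y)} = X ⁻¹' {x} ∩ Y ⁻¹' {y} := by
      ext ω; simp [Prod.ext_iff]
    rw [pm, hset, hindep.measure_inter_preimage_eq_mul _ _ (measurableSet_singleton x)
      (measurableSet_singleton y), hXunif, hYunif, ENNReal.toReal_mul, hkinv]
  -- Z pair pm's
  have hEq : MeasurableSet {ω | X ω = Y ω} := by
    have : {ω | X ω = Y ω} = ⋃ c ∈ (Finset.univ : Finset A), X ⁻¹' {c} ∩ Y ⁻¹' {c} := by
      ext ω
      simp only [Set.mem_setOf_eq, Set.mem_iUnion, Set.mem_inter_iff, Set.mem_preimage,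
        Set.mem_singleton_iff]
      constructor
      · intro h; exact ⟨Y ω, Finset.mem_univ _, h, rfl⟩
      · rintro ⟨c, _, h1, h2⟩; rw [h1, h2]
    rw [this]
    exact (Finset.univ : Finset A).measurableSet_biUnion fun c _ => (hXx c).inter (hYy c)
  have pmZMX1 : ∀ m x, pm μ (fun ω => ((if X ω = Y ω then (1 : Fin 2) else 0), (M ω, X ω)))
      (1, (m, x)) = p m x x := by
    intro m x
    have hset : (fun ω => ((if X ω = Y ω then (1 : Fin 2) else 0), (M ω, X ω))) ⁻¹' {(1, (m, x))}
        = M ⁻¹' {m} ∩ X ⁻¹' {x} ∩ Y ⁻¹' {x} := by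
      ext ω
      simp only [Set.mem_preimage, Set.mem_singleton_iff, Prod.ext_iff, Set.mem_inter_iff]
      constructor
      · rintro ⟨hz, hm, hx⟩
        by_cases hxy : X ω = Y ω
        · exact ⟨⟨hm, hx⟩, by rw [← hxy, hx]⟩
        · simp [hxy] at hz
      · rintro ⟨⟨hm, hx⟩, hy⟩
        refine ⟨?_, hm, hx⟩
        rw [if_pos (by rw [hx, hy])]
    rw [pm, hset]
  have pmZMX0 : ∀ m x, pm μ (fun ω => ((if X ω = Y ω then (1 : Fin 2) else 0), (M ω, X ω)))
      (0, (m, x)) = a m x - p m x x := by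
    intro m x
    have hset : (fun ω => ((if X ω = Y ω then (1 : Fin 2) else 0), (M ω, X ω))) ⁻¹' {(0, (m, x))}
        = (M ⁻¹' {m} ∩ X ⁻¹' {x}) ∩ {ω | X ω = Y ω}ᶜ := by
      ext ω
      simp only [Set.mem_preimage, Set.mem_singleton_iff, Prod.ext_iff, Set.mem_inter_iff,
        Set.mem_compl_iff, Set.mem_setOf_eq]
      constructor
      · rintro ⟨hz, hm, hx⟩
        by_cases hxy : X ω = Y ω
        · simp [hxy] at hz
        · exact ⟨⟨hm, hx⟩, hxy⟩
      · rintro ⟨⟨hm, hx⟩, hxy⟩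
        exact ⟨by rw [if_neg hxy], hm, hx⟩
    have hmeas : MeasurableSet ((M ⁻¹' {m} ∩ X ⁻¹' {x}) ∩ {ω | X ω = Y ω}ᶜ) :=
      ((hMm m).inter (hXx x)).inter hEq.compl
    rw [pm, hset, measure_eq_sum_fiber μ Y hY _ hmeas,
      ENNReal.toReal_sum (fun y _ => measure_ne_top μ _)]
    have hterm : ∀ y : A, (μ ((M ⁻¹' {m} ∩ X ⁻¹' {x}) ∩ {ω | X ω = Y ω}ᶜ ∩ Y ⁻¹' {y})).toReal
        = if y = x then 0 else p m x y := by
      intro y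
      by_cases hyx : y = x
      · have : (M ⁻¹' {m} ∩ X ⁻¹' {x}) ∩ {ω | X ω = Y ω}ᶜ ∩ Y ⁻¹' {y} = ∅ := by
          ext ω
          simp only [Set.mem_inter_iff, Set.mem_preimage, Set.mem_singleton_iff,
            Set.mem_compl_iff, Set.mem_setOf_eq, Set.mem_empty_iff_false, iff_false]
          rintro ⟨⟨⟨hm, hx⟩, hne⟩, hy⟩
          exact hne (by rw [hx, hy, hyx])
        rw [this, if_pos hyx]
        simp
      · have : (M ⁻¹' {m} ∩ X ⁻¹' {x}) ∩ {ω | X ω = Y ω}ᶜ ∩ Y ⁻¹' {y}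
            = M ⁻¹' {m} ∩ X ⁻¹' {x} ∩ Y ⁻¹' {y} := by
          ext ω
          simp only [Set.mem_inter_iff, Set.mem_preimage, Set.mem_singleton_iff,
            Set.mem_compl_iff, Set.mem_setOf_eq]
          constructor
          · rintro ⟨⟨⟨hm, hx⟩, _⟩, hy⟩; exact ⟨⟨hm, hx⟩, hy⟩
          · rintro ⟨⟨hm, hx⟩, hy⟩
            refine ⟨⟨⟨hm, hx⟩, ?_⟩, hy⟩
            intro hcon
            exact hyx (by rw [← hy, ← hcon, hx])
        rw [this, if_neg hyx]
    rw [Finset.sum_congr rfl (fun y _ => hterm y)]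
    have hsplit : ∀ y : A, p m x y = (if y = x then 0 else p m x y) + (if y = x then p m x y else 0) := by
      intro y; by_cases h : y = x <;> simp [h]
    have : a m x = (∑ y, if y = x then 0 else p m x y) + p m x x := by
      calc a m x = ∑ y, ((if y = x then 0 else p m x y) + (if y = x then p m x y else 0)) :=
            Finset.sum_congr rfl fun y _ => hsplit y
        _ = (∑ y, if y = x then 0 else p m x y) + (∑ y, if y = x then p m x y else 0) :=
            Finset.sum_add_distrib
        _ = (∑ y, if y = x then 0 else p m x y) + p m x x := by
            rw [Finset.sum_ite_eq' Finset.univ x (fun y => p m x y)]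
            simp
    linarith
  have pmZMY1 : ∀ m y, pm μ (fun ω => ((if X ω = Y ω then (1 : Fin 2) else 0), (M ω, Y ω)))
      (1, (m, y)) = p m y y := by
    intro m y
    have hset : (fun ω => ((if X ω = Y ω then (1 : Fin 2) else 0), (M ω, Y ω))) ⁻¹' {(1, (m, y))}
        = M ⁻¹' {m} ∩ X ⁻¹' {y} ∩ Y ⁻¹' {y} := by
      ext ω
      simp only [Set.mem_preimage, Set.mem_singleton_iff, Prod.ext_iff, Set.mem_inter_iff]
      constructor
      · rintro ⟨hz, hm, hy⟩
        by_cases hxy : X ω = Y ω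
        · exact ⟨⟨hm, by rw [hxy, hy]⟩, hy⟩
        · simp [hxy] at hz
      · rintro ⟨⟨hm, hx⟩, hy⟩
        exact ⟨by rw [if_pos (by rw [hx, hy])], hm, hy⟩
    rw [pm, hset]
  have pmZMY0 : ∀ m y, pm μ (fun ω => ((if X ω = Y ω then (1 : Fin 2) else 0), (M ω, Y ω)))
      (0, (m, y)) = b m y - p m y y := by
    intro m y
    have hset : (fun ω => ((if X ω = Y ω then (1 : Fin 2) else 0), (M ω, Y ω))) ⁻¹' {(0, (m, y))}
        = (M ⁻¹' {m} ∩ Y ⁻¹' {y}) ∩ {ω | X ω = Y ω}ᶜ := by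
      ext ω
      simp only [Set.mem_preimage, Set.mem_singleton_iff, Prod.ext_iff, Set.mem_inter_iff,
        Set.mem_compl_iff, Set.mem_setOf_eq]
      constructor
      · rintro ⟨hz, hm, hy⟩
        by_cases hxy : X ω = Y ω
        · simp [hxy] at hz
        · exact ⟨⟨hm, hy⟩, hxy⟩
      · rintro ⟨⟨hm, hy⟩, hxy⟩
        exact ⟨by rw [if_neg hxy], hm, hy⟩
    have hmeas : MeasurableSet ((M ⁻¹' {m} ∩ Y ⁻¹' {y}) ∩ {ω | X ω = Y ω}ᶜ) :=
      ((hMm m).inter (hYy y)).inter hEq.compl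
    rw [pm, hset, measure_eq_sum_fiber μ X hX _ hmeas,
      ENNReal.toReal_sum (fun x _ => measure_ne_top μ _)]
    have hterm : ∀ x : A, (μ ((M ⁻¹' {m} ∩ Y ⁻¹' {y}) ∩ {ω | X ω = Y ω}ᶜ ∩ X ⁻¹' {x})).toReal
        = if x = y then 0 else p m x y := by
      intro x
      by_cases hxy : x = y
      · have : (M ⁻¹' {m} ∩ Y ⁻¹' {y}) ∩ {ω | X ω = Y ω}ᶜ ∩ X ⁻¹' {x} = ∅ := by
          ext ω
          simp only [Set.mem_inter_iff, Set.mem_preimage, Set.mem_singleton_iff,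
            Set.mem_compl_iff, Set.mem_setOf_eq, Set.mem_empty_iff_false, iff_false]
          rintro ⟨⟨⟨hm, hy⟩, hne⟩, hx⟩
          exact hne (by rw [hx, hxy, hy])
        rw [this, if_pos hxy]
        simp
      · have : (M ⁻¹' {m} ∩ Y ⁻¹' {y}) ∩ {ω | X ω = Y ω}ᶜ ∩ X ⁻¹' {x}
            = M ⁻¹' {m} ∩ X ⁻¹' {x} ∩ Y ⁻¹' {y} := by
          ext ω
          simp only [Set.mem_inter_iff, Set.mem_preimage, Set.mem_singleton_iff,
            Set.mem_compl_iff, Set.mem_setOf_eq]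
          constructor
          · rintro ⟨⟨⟨hm, hy⟩, _⟩, hx⟩; exact ⟨⟨hm, hx⟩, hy⟩
          · rintro ⟨⟨hm, hx⟩, hy⟩
            refine ⟨⟨⟨hm, hy⟩, ?_⟩, hx⟩
            intro hcon
            exact hxy (by rw [← hx, hcon, hy])
        rw [this, if_neg hxy]
    rw [Finset.sum_congr rfl (fun x _ => hterm x)]
    have hsplit : ∀ x : A, p m x y = (if x = y then 0 else p m x y) + (if x = y then p m x y else 0) := by
      intro x; by_cases h : x = y <;> simp [h]
    have : b m y = (∑ x, if x = y then 0 else p m x y) + p m y y := by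
      calc b m y = ∑ x, ((if x = y then 0 else p m x y) + (if x = y then p m x y else 0)) :=
            Finset.sum_congr rfl fun x _ => hsplit x
        _ = (∑ x, if x = y then 0 else p m x y) + (∑ x, if x = y then p m x y else 0) :=
            Finset.sum_add_distrib
        _ = (∑ x, if x = y then 0 else p m x y) + p m y y := by
            rw [Finset.sum_ite_eq' Finset.univ y (fun x => p m x y)]
            simp
    linarith
    -- entropy evaluations
  have hkne : (k:ℝ) ≠ 0 := hk0.ne'
  have HMXe : entH μ (fun ω => (M ω, X ω)) = ∑ m, ∑ x, Real.negMulLog (a m x) := by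
    rw [entH, Fintype.sum_prod_type]
    exact Finset.sum_congr rfl fun m _ => Finset.sum_congr rfl fun x _ => by rw [pmMX m x]
  have HMYe : entH μ (fun ω => (M ω, Y ω)) = ∑ m, ∑ y, Real.negMulLog (b m y) := by
    rw [entH, Fintype.sum_prod_type]
    exact Finset.sum_congr rfl fun m _ => Finset.sum_congr rfl fun y _ => by rw [pmMY m y]
  have HMe : entH μ M = ∑ m, Real.negMulLog (q m) := by
    rw [entH]
    exact Finset.sum_congr rfl fun m _ => by rw [pmM m]
  have HVe : entH μ (fun ω => (M ω, X ω, Y ω)) = ∑ m, ∑ x, ∑ y, Real.negMulLog (p m x y) := by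
    rw [entH, Fintype.sum_prod_type]
    refine Finset.sum_congr rfl fun m _ => ?_
    rw [Fintype.sum_prod_type]
    exact Finset.sum_congr rfl fun x _ => Finset.sum_congr rfl fun y _ => by rw [pmV m x y]
  have hnml : Real.negMulLog ((k:ℝ)⁻¹ * (k:ℝ)⁻¹)
      = 2 * Real.log k * ((k:ℝ)⁻¹ * (k:ℝ)⁻¹) := by
    rw [Real.negMulLog, Real.log_mul (by positivity) (by positivity), Real.log_inv]
    ring
  have HXYe : entH μ (fun ω => (X ω, Y ω)) = 2 * Real.log k := by
    rw [entH, Fintype.sum_prod_type]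
    rw [Finset.sum_congr rfl fun x (_ : x ∈ Finset.univ) => Finset.sum_congr rfl
      fun y (_ : y ∈ Finset.univ) => by rw [pmXY x y, hnml]]
    rw [Finset.sum_const, Finset.sum_const, Finset.card_univ, hA, nsmul_eq_mul, nsmul_eq_mul]
    field_simp
  have pmX : ∀ x, pm μ X x = (k:ℝ)⁻¹ := fun x => by rw [pm, hXunif, hkinv]
  have pmY : ∀ y, pm μ Y y = (k:ℝ)⁻¹ := fun y => by rw [pm, hYunif, hkinv]
  have HXe : entH μ X = Real.log k := by
    rw [entH, Finset.sum_congr rfl fun x (_ : x ∈ Finset.univ) => by rw [pmX x]]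
    rw [Finset.sum_const, Finset.card_univ, hA, nsmul_eq_mul, Real.negMulLog, Real.log_inv]
    field_simp
  have HYe : entH μ Y = Real.log k := by
    rw [entH, Finset.sum_congr rfl fun y (_ : y ∈ Finset.univ) => by rw [pmY y]]
    rw [Finset.sum_const, Finset.card_univ, hA, nsmul_eq_mul, Real.negMulLog, Real.log_inv]
    field_simp
  have HZXe : entH μ (fun ω => ((if X ω = Y ω then (1:Fin 2) else 0), (M ω, X ω)))
      = (∑ m, ∑ x, Real.negMulLog (a m x - p m x x))
        + ∑ m, ∑ x, Real.negMulLog (p m x x) := by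
    rw [entH, Fintype.sum_prod_type, Fin.sum_univ_two]
    congr 1
    · rw [Fintype.sum_prod_type]
      exact Finset.sum_congr rfl fun m _ => Finset.sum_congr rfl fun x _ => by
        rw [pmZMX0 m x]
    · rw [Fintype.sum_prod_type]
      exact Finset.sum_congr rfl fun m _ => Finset.sum_congr rfl fun x _ => by
        rw [pmZMX1 m x]
  have HZYe : entH μ (fun ω => ((if X ω = Y ω then (1:Fin 2) else 0), (M ω, Y ω)))
      = (∑ m, ∑ y, Real.negMulLog (b m y - p m y y))
        + ∑ m, ∑ y, Real.negMulLog (p m y y) := by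
    rw [entH, Fintype.sum_prod_type, Fin.sum_univ_two]
    congr 1
    · rw [Fintype.sum_prod_type]
      exact Finset.sum_congr rfl fun m _ => Finset.sum_congr rfl fun y _ => by
        rw [pmZMY0 m y]
    · rw [Fintype.sum_prod_type]
      exact Finset.sum_congr rfl fun m _ => Finset.sum_congr rfl fun y _ => by
        rw [pmZMY1 m y]
  -- tuple reordering
  have eXMY : entH μ (fun ω => ((X ω, M ω), Y ω)) = entH μ (fun ω => (M ω, X ω, Y ω)) :=
    entH_comp_inj μ (fun ω => (M ω, X ω, Y ω)) (fun z : T × A × A => ((z.2.1, z.1), z.2.2))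
      (by intro z w h; simp only [Prod.ext_iff] at h ⊢; tauto)
  have eYMX : entH μ (fun ω => ((Y ω, M ω), X ω)) = entH μ (fun ω => (M ω, X ω, Y ω)) :=
    entH_comp_inj μ (fun ω => (M ω, X ω, Y ω)) (fun z : T × A × A => ((z.2.2, z.1), z.2.1))
      (by intro z w h; simp only [Prod.ext_iff] at h ⊢; tauto)
  have eXYM : entH μ (fun ω => ((X ω, Y ω), M ω)) = entH μ (fun ω => (M ω, X ω, Y ω)) :=
    entH_comp_inj μ (fun ω => (M ω, X ω, Y ω)) (fun z : T × A × A => ((z.2.1, z.2.2), z.1))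
      (by intro z w h; simp only [Prod.ext_iff] at h ⊢; tauto)
  have eYX : entH μ (fun ω => (Y ω, X ω)) = entH μ (fun ω => (X ω, Y ω)) :=
    entH_comp_inj μ (fun ω => (X ω, Y ω)) (fun z : A × A => (z.2, z.1))
      (by intro z w h; simp only [Prod.ext_iff] at h ⊢; tauto)
  have eXM : entH μ (fun ω => (X ω, M ω)) = entH μ (fun ω => (M ω, X ω)) :=
    entH_comp_inj μ (fun ω => (M ω, X ω)) (fun z : T × A => (z.2, z.1))
      (by intro z w h; simp only [Prod.ext_iff] at h ⊢; tauto)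
  have eYM : entH μ (fun ω => (Y ω, M ω)) = entH μ (fun ω => (M ω, Y ω)) :=
    entH_comp_inj μ (fun ω => (M ω, Y ω)) (fun z : T × A => (z.2, z.1))
      (by intro z w h; simp only [Prod.ext_iff] at h ⊢; tauto)
  -- basic sum identities
  have hq_as_a : ∀ m, q m = ∑ x, a m x := fun m => rfl
  have hq_as_b : ∀ m, q m = ∑ y, b m y := fun m => Finset.sum_comm
  have pzero : ∀ m, q m = 0 → ∀ x y, p m x y = 0 := by
    intro m hm
    exact sum_sum_eq_zero (p m) (hpnn m) hm
  -- hypothesis hXY in pmf form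
  have hXY' : (∑ m, ∑ x, Real.negMulLog (a m x)) + (∑ m, ∑ y, Real.negMulLog (b m y))
      - (∑ m, ∑ x, ∑ y, Real.negMulLog (p m x y)) - (∑ m, Real.negMulLog (q m)) = 0 := by
    have h := hXY
    simp only [condMutInf] at h
    rw [eXM, eYM, eXYM, HMXe, HMYe, HVe, HMe] at h
    linarith
  -- hypothesis hZX, hZY in pmf form
  have hzx0 : ∀ m x, p m x x = 0 ∨ a m x - p m x x = 0 := by
    have h := hZX
    simp only [condEnt] at h
    rw [HZXe, HMXe] at h
    have hsum0 : ∑ m, ∑ x, (Real.negMulLog (a m x - p m x x) + Real.negMulLog (p m x x)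
        - Real.negMulLog (a m x)) = 0 := by
      simp only [Finset.sum_add_distrib, Finset.sum_sub_distrib]
      linarith
    have hterm := sum_sum_eq_zero _ (fun m x => by
        have hle := negMulLog_add_le (a m x - p m x x) (p m x x)
          (by linarith [hpa m x x]) (hpnn m x x)
        have heq2 : a m x - p m x x + p m x x = a m x := by ring
        rw [heq2] at hle
        linarith) hsum0
    intro m x
    have h0 := hterm m x
    have hd := negMulLog_add_eq (a m x - p m x x) (p m x x)
      (by linarith [hpa m x x]) (hpnn m x x)
      (by rw [show a m x - p m x x + p m x x = a m x from by ring]; linarith)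
    tauto
  have hzy0 : ∀ m y, p m y y = 0 ∨ b m y - p m y y = 0 := by
    have h := hZY
    simp only [condEnt] at h
    rw [HZYe, HMYe] at h
    have hsum0 : ∑ m, ∑ y, (Real.negMulLog (b m y - p m y y) + Real.negMulLog (p m y y)
        - Real.negMulLog (b m y)) = 0 := by
      simp only [Finset.sum_add_distrib, Finset.sum_sub_distrib]
      linarith
    have hterm := sum_sum_eq_zero _ (fun m y => by
        have hle := negMulLog_add_le (b m y - p m y y) (p m y y)
          (by linarith [hpb m y y]) (hpnn m y y)
        have heq2 : b m y - p m y y + p m y y = b m y := by ring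
        rw [heq2] at hle
        linarith) hsum0
    intro m y
    have h0 := hterm m y
    have hd := negMulLog_add_eq (b m y - p m y y) (p m y y)
      (by linarith [hpb m y y]) (hpnn m y y)
      (by rw [show b m y - p m y y + p m y y = b m y from by ring]; linarith)
    tauto
  -- conditional independence per m
  have hi_nonneg : ∀ m, 0 ≤ (∑ x, Real.negMulLog (a m x)) + (∑ y, Real.negMulLog (b m y))
      - (∑ x, ∑ y, Real.negMulLog (p m x y)) - Real.negMulLog (q m) := by
    intro m
    rcases eq_or_lt_of_le (hqnn m) with h0 | h0
    · have hz := pzero m h0.symm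
      have ha0 : ∀ x, a m x = 0 := fun x => Finset.sum_eq_zero fun y _ => hz x y
      have hb0 : ∀ y, b m y = 0 := fun y => Finset.sum_eq_zero fun x _ => hz x y
      rw [← h0]
      simp [ha0, hb0, hz]
    · exact (mutual_info_aux (p m) (hpnn m) (q m) h0 rfl).1
  have hi_zero : ∀ m, (∑ x, Real.negMulLog (a m x)) + (∑ y, Real.negMulLog (b m y))
      - (∑ x, ∑ y, Real.negMulLog (p m x y)) - Real.negMulLog (q m) = 0 := by
    have hsum : ∑ m, ((∑ x, Real.negMulLog (a m x)) + (∑ y, Real.negMulLog (b m y))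
        - (∑ x, ∑ y, Real.negMulLog (p m x y)) - Real.negMulLog (q m)) = 0 := by
      simp only [Finset.sum_add_distrib, Finset.sum_sub_distrib]
      linarith
    intro m
    exact (Finset.sum_eq_zero_iff_of_nonneg (fun m _ => hi_nonneg m)).mp hsum m
      (Finset.mem_univ m)
  have hfact : ∀ m, 0 < q m → ∀ x y, q m * p m x y = a m x * b m y := by
    intro m hq0 x y
    exact (mutual_info_aux (p m) (hpnn m) (q m) hq0 rfl).2 (hi_zero m) x y
  -- totals
  have htot : ∑ m, q m = 1 := by
    have e1 : ∑ m, q m = ∑ x, ∑ m, ∑ y, p m x y := Finset.sum_comm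
    have e2 : ∀ x : A, ∑ m, ∑ y, p m x y = ∑ y, ∑ m, p m x y := fun x => Finset.sum_comm
    rw [e1, Finset.sum_congr rfl fun x (_ : x ∈ Finset.univ) => e2 x]
    rw [Finset.sum_congr rfl fun x (_ : x ∈ Finset.univ) => Finset.sum_congr rfl
      fun y (_ : y ∈ Finset.univ) => summ x y]
    rw [Finset.sum_const, Finset.sum_const, Finset.card_univ, hA, nsmul_eq_mul, nsmul_eq_mul]
    field_simp
  have hdsum : ∑ m, ∑ x, p m x x = (k:ℝ)⁻¹ := by
    rw [Finset.sum_comm]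
    rw [Finset.sum_congr rfl fun x (_ : x ∈ Finset.univ) => summ x x]
    rw [Finset.sum_const, Finset.card_univ, hA, nsmul_eq_mul]
    field_simp
  -- per-m bound
  have hmb : ∀ m, (∑ x, Real.negMulLog (a m x)) - Real.negMulLog (q m)
      + ((∑ y, Real.negMulLog (b m y)) - Real.negMulLog (q m))
      ≤ (q m - ∑ x, p m x x) * (2 * Real.log ((k:ℝ)/2)) := by
    intro m
    rcases eq_or_lt_of_le (hqnn m) with h0 | h0
    · have hz := pzero m h0.symm
      have ha0 : ∀ x, a m x = 0 := fun x => Finset.sum_eq_zero fun y _ => hz x y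
      have hb0 : ∀ y, b m y = 0 := fun y => Finset.sum_eq_zero fun x _ => hz x y
      rw [← h0]
      simp [ha0, hb0, hz]
    · by_cases hD : ∀ x, p m x x = 0
      · -- disjoint rectangle case
        set S : Finset A := Finset.univ.filter (fun x => a m x ≠ 0) with hSdef
        set T' : Finset A := Finset.univ.filter (fun y => b m y ≠ 0) with hTdef
        have hSne : S.Nonempty := by
          by_contra hS
          rw [Finset.not_nonempty_iff_eq_empty] at hS
          have hall : ∀ x, a m x = 0 := by
            intro x
            by_contra hax
            have hmem : x ∈ S := by rw [hSdef]; simp [hax]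
            rw [hS] at hmem
            exact absurd hmem (Finset.notMem_empty x)
          have : q m = 0 := by
            rw [hq_as_a m]
            exact Finset.sum_eq_zero fun x _ => hall x
          linarith
        have hTne : T'.Nonempty := by
          by_contra hT
          rw [Finset.not_nonempty_iff_eq_empty] at hT
          have hall : ∀ y, b m y = 0 := by
            intro y
            by_contra hby
            have hmem : y ∈ T' := by rw [hTdef]; simp [hby]
            rw [hT] at hmem
            exact absurd hmem (Finset.notMem_empty y)
          have : q m = 0 := by
            rw [hq_as_b m]
            exact Finset.sum_eq_zero fun y _ => hall y
          linarith
        have hb1 := sum_negMulLog_le_log_card (a m) (hann m) S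
          (fun x hx => by rw [hSdef]; simp [hx]) (q m) h0 (hq_as_a m).symm hSne
        have hb2 := sum_negMulLog_le_log_card (b m) (hbnn m) T'
          (fun y hy => by rw [hTdef]; simp [hy]) (q m) h0 (hq_as_b m).symm hTne
        have hdisj : Disjoint S T' := by
          rw [Finset.disjoint_left]
          intro x hxS hxT
          rw [hSdef, Finset.mem_filter] at hxS
          rw [hTdef, Finset.mem_filter] at hxT
          have hf := hfact m h0 x x
          rw [hD x, mul_zero] at hf
          exact absurd hf.symm (mul_ne_zero hxS.2 hxT.2)
        have hcards : S.card + T'.card ≤ k := by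
          have h1 := Finset.card_union_of_disjoint hdisj
          have h2 : (S ∪ T').card ≤ Fintype.card A := Finset.card_le_univ _
          omega
        have hlog : Real.log (S.card : ℝ) + Real.log (T'.card : ℝ)
            ≤ 2 * Real.log ((k:ℝ)/2) := by
          have hS1' : (1:ℝ) ≤ (S.card:ℝ) := by exact_mod_cast Finset.card_pos.mpr hSne
          have hT1' : (1:ℝ) ≤ (T'.card:ℝ) := by exact_mod_cast Finset.card_pos.mpr hTne
          have hsum' : (S.card:ℝ) + (T'.card:ℝ) ≤ (k:ℝ) := by exact_mod_cast hcards
          have hprod : (S.card:ℝ) * (T'.card:ℝ) ≤ ((k:ℝ)/2)^2 := by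
            nlinarith [sq_nonneg ((S.card:ℝ) - (T'.card:ℝ))]
          have hSTpos : (0:ℝ) < (S.card:ℝ) * (T'.card:ℝ) := by nlinarith
          have hmono := Real.log_le_log hSTpos hprod
          rw [Real.log_mul (ne_of_gt (by linarith : (0:ℝ) < (S.card:ℝ)))
            (ne_of_gt (by linarith : (0:ℝ) < (T'.card:ℝ))), Real.log_pow] at hmono
          push_cast at hmono
          linarith
        have hd0 : ∑ x, p m x x = 0 := Finset.sum_eq_zero fun x _ => hD x
        have step1 : (∑ x, Real.negMulLog (a m x)) - Real.negMulLog (q m)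
            + ((∑ y, Real.negMulLog (b m y)) - Real.negMulLog (q m))
            ≤ q m * (Real.log (S.card : ℝ) + Real.log (T'.card : ℝ)) := by
          have hqm : q m * (Real.log (S.card : ℝ) + Real.log (T'.card : ℝ))
              = q m * Real.log (S.card : ℝ) + q m * Real.log (T'.card : ℝ) := by ring
          linarith [hb1, hb2]
        have step2 : q m * (Real.log (S.card : ℝ) + Real.log (T'.card : ℝ))
            ≤ q m * (2 * Real.log ((k:ℝ)/2)) := mul_le_mul_of_nonneg_left hlog h0.le
        rw [hd0]
        calc (∑ x, Real.negMulLog (a m x)) - Real.negMulLog (q m)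
              + ((∑ y, Real.negMulLog (b m y)) - Real.negMulLog (q m))
            ≤ q m * (2 * Real.log ((k:ℝ)/2)) := le_trans step1 step2
          _ = (q m - 0) * (2 * Real.log ((k:ℝ)/2)) := by ring
      · -- diagonal case
        push_neg at hD
        obtain ⟨x0, hx0⟩ := hD
        have ha0 : a m x0 = p m x0 x0 := by
          rcases hzx0 m x0 with h | h
          · exact absurd h hx0
          · linarith
        have hb0 : b m x0 = p m x0 x0 := by
          rcases hzy0 m x0 with h | h
          · exact absurd h hx0
          · linarith
        have hq0 : q m = p m x0 x0 := by
          have hf := hfact m h0 x0 x0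
          rw [ha0, hb0] at hf
          exact mul_right_cancel₀ hx0 hf
        have herase : ∑ x ∈ Finset.univ.erase x0, a m x = 0 := by
          have hsplit := Finset.sum_erase_add Finset.univ (a m) (Finset.mem_univ x0)
          rw [← hq_as_a m] at hsplit
          rw [ha0, ← hq0] at hsplit
          linarith
        have haz : ∀ x, x ≠ x0 → a m x = 0 := by
          intro x hx
          exact (Finset.sum_eq_zero_iff_of_nonneg (fun x' _ => hann m x')).mp herase x
            (Finset.mem_erase.mpr ⟨hx, Finset.mem_univ x⟩)
        have hsum_a : ∑ x, Real.negMulLog (a m x) = Real.negMulLog (q m) := by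
          rw [← Finset.sum_erase_add Finset.univ _ (Finset.mem_univ x0)]
          rw [Finset.sum_eq_zero (fun x hx => by
            rw [haz x (Finset.mem_erase.mp hx).1, Real.negMulLog_zero])]
          rw [zero_add, ha0, ← hq0]
        have herase_b : ∑ y ∈ Finset.univ.erase x0, b m y = 0 := by
          have hsplit := Finset.sum_erase_add Finset.univ (b m) (Finset.mem_univ x0)
          rw [← hq_as_b m] at hsplit
          rw [hb0, ← hq0] at hsplit
          linarith
        have hbz : ∀ y, y ≠ x0 → b m y = 0 := by
          intro y hy
          exact (Finset.sum_eq_zero_iff_of_nonneg (fun y' _ => hbnn m y')).mp herase_b y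
            (Finset.mem_erase.mpr ⟨hy, Finset.mem_univ y⟩)
        have hsum_b : ∑ y, Real.negMulLog (b m y) = Real.negMulLog (q m) := by
          rw [← Finset.sum_erase_add Finset.univ _ (Finset.mem_univ x0)]
          rw [Finset.sum_eq_zero (fun y hy => by
            rw [hbz y (Finset.mem_erase.mp hy).1, Real.negMulLog_zero])]
          rw [zero_add, hb0, ← hq0]
        have hd_eq : ∑ x, p m x x = q m := by
          rw [← Finset.sum_erase_add Finset.univ _ (Finset.mem_univ x0)]
          rw [Finset.sum_eq_zero (fun x hx => le_antisymm
            (le_trans (hpa m x x) (le_of_eq (haz x (Finset.mem_erase.mp hx).1)))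
            (hpnn m x x))]
          rw [zero_add, hq0]
        rw [hsum_a, hsum_b, hd_eq]
        simp
  -- global bound
  have hglobal : (∑ m, ∑ x, Real.negMulLog (a m x)) - (∑ m, Real.negMulLog (q m))
      + ((∑ m, ∑ y, Real.negMulLog (b m y)) - (∑ m, Real.negMulLog (q m)))
      ≤ (1 - (k:ℝ)⁻¹) * (2 * Real.log ((k:ℝ)/2)) := by
    have h1 : ∑ m, ((∑ x, Real.negMulLog (a m x)) - Real.negMulLog (q m)
        + ((∑ y, Real.negMulLog (b m y)) - Real.negMulLog (q m)))
        ≤ ∑ m, (q m - ∑ x, p m x x) * (2 * Real.log ((k:ℝ)/2)) :=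
      Finset.sum_le_sum fun m _ => hmb m
    rw [← Finset.sum_mul] at h1
    have h2 : ∑ m, (q m - ∑ x, p m x x) = 1 - (k:ℝ)⁻¹ := by
      rw [Finset.sum_sub_distrib, htot, hdsum]
    rw [h2] at h1
    simp only [Finset.sum_add_distrib, Finset.sum_sub_distrib] at h1
    linarith
  -- final assembly
  have lhs_eq : condMutInf μ X M Y + condMutInf μ Y M X
      = 2 * Real.log k
        - ((∑ m, ∑ x, Real.negMulLog (a m x)) - (∑ m, Real.negMulLog (q m))
          + ((∑ m, ∑ y, Real.negMulLog (b m y)) - (∑ m, Real.negMulLog (q m)))) := by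
    simp only [condMutInf]
    rw [eYX, eXMY, eYMX, HXYe, HMYe, HMXe, HVe, HYe, HXe]
    linarith [hXY']
  have hlogdiv : Real.log ((k:ℝ)/2) = Real.log k - Real.log 2 :=
    Real.log_div hkne two_ne_zero
  have hexpand : (1 - (k:ℝ)⁻¹) * (2 * Real.log ((k:ℝ)/2))
      = 2 * Real.log ((k:ℝ)/2) - (2/(k:ℝ)) * Real.log ((k:ℝ)/2) := by
    field_simp
  rw [ge_iff_le, lhs_eq]
  linarith [hglobal, hexpand, hlogdiv]
end
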